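/- arXiv:1802.07712 — 3 statements merged into one kernel-verified Lean document; each statement's English description precedes it below -/
import Mathlib

section
/- Let A be an m×n matrix and B an m×q matrix with entries in T = ℝ ∪ {−∞} such that every column of A has at least one finite entry, every row of A has at least one finite entry, and every row of B has at least one finite entry, and let P be a q×n row-stochastic matrix; let F : ℝⁿ → ℝⁿ be the associated Shapley operator and F* the dual Shapley operator, extended to a self-map of Tᵐ. Then the condition number of 𝒫_ℝ(F) coincides with that of 𝒫(F*); precisely: if there exists x ∈ ℝⁿ with x_i < F(x)_i for all i, then inf{‖u‖_∞ : u ∈ ℝⁿ, 𝒫_ℝ(u + F) is infeasible} = inf{‖w‖_∞ : w ∈ ℝᵐ, 𝒫(w + F*) is feasible}; otherwise, inf{‖u‖_∞ : u ∈ ℝⁿ, 𝒫_ℝ(u + F) is feasible} = inf{‖w‖_∞ : w ∈ ℝᵐ, 𝒫(w + F*) is infeasible} (infima in [0, +∞], inf ∅ := +∞). -/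
open scoped ENNReal

noncomputable section

variable {m n q : ℕ}

/-- The real value of a finite element of `T = ℝ ∪ {-∞}` (junk value `0` at `-∞`). -/
def sval (a : WithBot ℝ) : ℝ := WithBot.unbotD 0 a

/-- The Shapley operator `F : ℝⁿ → ℝⁿ` associated with `A, B, P`. -/
def shapley (A : Fin m → Fin n → WithBot ℝ) (B : Fin m → Fin q → WithBot ℝ)
    (P : Fin q → Fin n → ℝ) (x : Fin n → ℝ) : Fin n → ℝ := fun j =>
  sInf {r : ℝ | ∃ i, A i j ≠ ⊥ ∧
    r = - sval (A i j) +
      sSup {s : ℝ | ∃ k, B i k ≠ ⊥ ∧ s = sval (B i k) + ∑ l, P k l * x l}}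

/-- `z_l(y) = max_{i' : A_{i'l} ≠ -∞} (A_{i'l} + y_{i'}) ∈ T`, with `(-∞) + a = -∞`.
(Terms with `A_{i'l} = -∞` contribute `-∞ = ⊥` and do not affect the supremum.) -/
def zvec (A : Fin m → Fin n → WithBot ℝ) (y : Fin m → WithBot ℝ) (l : Fin n) : WithBot ℝ :=
  Finset.univ.sup fun i' => A i' l + y i'

open Classical in
/-- `s_k(y) = Σ_l P_{kl} · z_l(y)`, with the convention that `s_k(y) = -∞` as soon as
`z_l(y) = -∞` for some `l` with `P_{kl} > 0`. -/
def svec (A : Fin m → Fin n → WithBot ℝ) (P : Fin q → Fin n → ℝ)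
    (y : Fin m → WithBot ℝ) (k : Fin q) : WithBot ℝ :=
  if ∃ l, 0 < P k l ∧ zvec A y l = ⊥ then ⊥
  else ((∑ l, P k l * sval (zvec A y l) : ℝ) : WithBot ℝ)

open Classical in
/-- The dual Shapley operator `F* : Tᵐ → Tᵐ`,
`F*(y)_i = min_{k : B_{ik} ≠ -∞} ( -B_{ik} + s_k(y) )`, with `-B_{ik} + (-∞) = -∞`. -/
def dualShapleyT (A : Fin m → Fin n → WithBot ℝ) (B : Fin m → Fin q → WithBot ℝ)
    (P : Fin q → Fin n → ℝ) (y : Fin m → WithBot ℝ) : Fin m → WithBot ℝ := fun i =>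
  if h : (Finset.univ.filter fun k => B i k ≠ ⊥).Nonempty then
    (Finset.univ.filter fun k => B i k ≠ ⊥).inf' h fun k =>
      if svec A P y k = ⊥ then ⊥
      else ((- sval (B i k) + sval (svec A P y k) : ℝ) : WithBot ℝ)
  else ⊥

/-- The additive perturbation `u + G` of a self-map `G` of `ℝ^d`. -/
def pertR {d : ℕ} (u : Fin d → ℝ) (G : (Fin d → ℝ) → (Fin d → ℝ)) :
    (Fin d → ℝ) → (Fin d → ℝ) := fun x i => u i + G x i

/-- The additive perturbation `w + G` of a self-map `G` of `T^d`. -/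
def pertT {d : ℕ} (w : Fin d → ℝ) (G : (Fin d → WithBot ℝ) → (Fin d → WithBot ℝ)) :
    (Fin d → WithBot ℝ) → (Fin d → WithBot ℝ) := fun y i => (w i : WithBot ℝ) + G y i

/-- Feasibility of `𝒫_ℝ(G)` for a self-map `G` of `ℝ^d`. -/
def FeasR {d : ℕ} (G : (Fin d → ℝ) → (Fin d → ℝ)) : Prop :=
  ∃ x : Fin d → ℝ, ∀ i, x i < G x i

/-- Feasibility of `𝒫(G)` for a self-map `G` of `T^d`. -/
def FeasT {d : ℕ} (G : (Fin d → WithBot ℝ) → (Fin d → WithBot ℝ)) : Prop :=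
  ∃ y : Fin d → WithBot ℝ, y ≠ (fun _ => ⊥) ∧ y ≤ G y

/-! ### Auxiliary development for the proof -/

namespace SD
open Finset

lemma sval_coe (x : ℝ) : sval (x : WithBot ℝ) = x := WithBot.unbotD_coe _ _

lemma sval_le_sval {a b : WithBot ℝ} (ha : a ≠ ⊥) (hab : a ≤ b) : sval a ≤ sval b := by
  have hb : b ≠ ⊥ := fun h => ha (le_bot_iff.mp (h ▸ hab))
  lift a to ℝ using ha
  lift b to ℝ using hb
  rw [sval_coe, sval_coe]
  exact_mod_cast hab

lemma coe_sval {a : WithBot ℝ} (ha : a ≠ ⊥) : (sval a : WithBot ℝ) = a := by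
  lift a to ℝ using ha; rw [sval_coe]

lemma sval_add_coe (b : WithBot ℝ) (hb : b ≠ ⊥) (c : ℝ) :
    sval (b + (c : WithBot ℝ)) = sval b + c := by
  lift b to ℝ using hb
  rw [← WithBot.coe_add, sval_coe, sval_coe]

lemma coe_add_inf' {α : Type*} (s : Finset α) (h : s.Nonempty) (f : α → WithBot ℝ) (c : ℝ) :
    (c : WithBot ℝ) + s.inf' h f = s.inf' h fun a => (c : WithBot ℝ) + f a := by
  induction h using Finset.Nonempty.cons_induction with
  | singleton a => simp
  | cons a s ha hs ih =>
      rw [Finset.inf'_cons (H := hs), Finset.inf'_cons (H := hs), ← ih]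
      rcases le_total (f a) (s.inf' hs f) with hle | hle
      · rw [inf_eq_left.2 hle, inf_eq_left.2 (add_le_add_right hle _)]
      · rw [inf_eq_right.2 hle, inf_eq_right.2 (add_le_add_right hle _)]

open Classical in
def Kf (B : Fin m → Fin q → WithBot ℝ) (i : Fin m) : Finset (Fin q) :=
  Finset.univ.filter fun k => B i k ≠ ⊥
open Classical in
def If (A : Fin m → Fin n → WithBot ℝ) (j : Fin n) : Finset (Fin m) :=
  Finset.univ.filter fun i => A i j ≠ ⊥
open Classical in
def Jf (A : Fin m → Fin n → WithBot ℝ) (i : Fin m) : Finset (Fin n) :=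
  Finset.univ.filter fun j => A i j ≠ ⊥

lemma Kf_ne (B : Fin m → Fin q → WithBot ℝ) (hB : ∀ i, ∃ k, B i k ≠ ⊥) (i : Fin m) :
    (Kf B i).Nonempty := by
  obtain ⟨k, hk⟩ := hB i; exact ⟨k, by simp [Kf, hk]⟩
lemma If_ne (A : Fin m → Fin n → WithBot ℝ) (hA : ∀ j, ∃ i, A i j ≠ ⊥) (j : Fin n) :
    (If A j).Nonempty := by
  obtain ⟨i, hi⟩ := hA j; exact ⟨i, by simp [If, hi]⟩
lemma Jf_ne (A : Fin m → Fin n → WithBot ℝ) (hA : ∀ i, ∃ j, A i j ≠ ⊥) (i : Fin m) :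
    (Jf A i).Nonempty := by
  obtain ⟨j, hj⟩ := hA i; exact ⟨j, by simp [Jf, hj]⟩

lemma mem_Kf {B : Fin m → Fin q → WithBot ℝ} {i k} : k ∈ Kf B i ↔ B i k ≠ ⊥ := by simp [Kf]
lemma mem_If {A : Fin m → Fin n → WithBot ℝ} {i j} : i ∈ If A j ↔ A i j ≠ ⊥ := by simp [If]
lemma mem_Jf {A : Fin m → Fin n → WithBot ℝ} {i j} : j ∈ Jf A i ↔ A i j ≠ ⊥ := by simp [Jf]

-- generic finset helpers
lemma sup'_le_sup'_add {α : Type*} (s : Finset α) (h : s.Nonempty) (f g : α → ℝ) (c : ℝ)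
    (hfg : ∀ a ∈ s, f a ≤ g a + c) : s.sup' h f ≤ s.sup' h g + c := by
  apply Finset.sup'_le; intro a ha
  exact (hfg a ha).trans (add_le_add_left (Finset.le_sup' g ha) c)

lemma inf'_le_inf'_add {α : Type*} (s : Finset α) (h : s.Nonempty) (f g : α → ℝ) (c : ℝ)
    (hfg : ∀ a ∈ s, f a ≤ g a + c) : s.inf' h f ≤ s.inf' h g + c := by
  obtain ⟨a, ha, hEq⟩ := Finset.exists_mem_eq_inf' h g
  calc s.inf' h f ≤ f a := Finset.inf'_le f ha
  _ ≤ g a + c := hfg a ha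
  _ = s.inf' h g + c := by rw [hEq]

lemma neg_inf' {α : Type*} (s : Finset α) (h : s.Nonempty) (f : α → ℝ) :
    - s.inf' h f = s.sup' h fun a => - f a := by
  apply le_antisymm
  · obtain ⟨a, ha, hEq⟩ := Finset.exists_mem_eq_inf' h f
    rw [hEq]; exact Finset.le_sup' (fun a => - f a) ha
  · apply Finset.sup'_le; intro a ha
    simp only [neg_le_neg_iff]; exact Finset.inf'_le f ha

section main

variable (A : Fin m → Fin n → WithBot ℝ) (B : Fin m → Fin q → WithBot ℝ)
  (P : Fin q → Fin n → ℝ)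

/-- `g_α(x)_i = max_k (B_ik + α (Px)_k)` -/
def gA (hBrow : ∀ i, ∃ k, B i k ≠ ⊥) (α : ℝ) (x : Fin n → ℝ) (i : Fin m) : ℝ :=
  (Kf B i).sup' (Kf_ne B hBrow i) fun k => sval (B i k) + α * ∑ l, P k l * x l

/-- the α-discounted Shapley operator -/
def FA (hAcol : ∀ j, ∃ i, A i j ≠ ⊥) (hBrow : ∀ i, ∃ k, B i k ≠ ⊥)
    (α : ℝ) (x : Fin n → ℝ) (j : Fin n) : ℝ :=
  (If A j).inf' (If_ne A hAcol j) fun i => - sval (A i j) + gA B P hBrow α x i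


/-- `z'_i(x) = max_j (A_ij + x_j)` -/
def zrow (hArow : ∀ i, ∃ j, A i j ≠ ⊥) (x : Fin n → ℝ) (i : Fin m) : ℝ :=
  (Jf A i).sup' (Jf_ne A hArow i) fun j => sval (A i j) + x j

lemma shapley_eq_FA (hAcol : ∀ j, ∃ i, A i j ≠ ⊥) (hBrow : ∀ i, ∃ k, B i k ≠ ⊥)
    (x : Fin n → ℝ) : shapley A B P x = FA A B P hAcol hBrow 1 x := by
  funext j
  have hg : ∀ i : Fin m,
      sSup {s : ℝ | ∃ k, B i k ≠ ⊥ ∧ s = sval (B i k) + ∑ l, P k l * x l}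
        = gA B P hBrow 1 x i := by
    intro i
    unfold gA
    rw [Finset.sup'_eq_csSup_image]
    congr 1
    ext s
    constructor
    · rintro ⟨k, hk, rfl⟩
      exact ⟨k, by simpa [Kf] using hk, by simp⟩
    · rintro ⟨k, hk, rfl⟩
      exact ⟨k, by simpa [Kf] using hk, by simp⟩
  unfold shapley FA
  simp only [hg]
  rw [Finset.inf'_eq_csInf_image]
  congr 1
  ext r
  constructor
  · rintro ⟨i, hi, rfl⟩
    exact ⟨i, by simpa [If] using hi, rfl⟩
  · rintro ⟨i, hi, rfl⟩
    exact ⟨i, by simpa [If] using hi, rfl⟩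

/-- weak duality -/
theorem weak_duality (hAcol : ∀ j, ∃ i, A i j ≠ ⊥) (hArow : ∀ i, ∃ j, A i j ≠ ⊥)
    (hBrow : ∀ i, ∃ k, B i k ≠ ⊥) (hPnn : ∀ k l, 0 ≤ P k l) (hPsum : ∀ k, ∑ l, P k l = 1)
    (hF : FeasR (shapley A B P)) (hD : FeasT (dualShapleyT A B P)) : False := by
  classical
  obtain ⟨x, hx⟩ := hF
  obtain ⟨y, hy0, hyle⟩ := hD
  have hex : ∃ i, y i ≠ ⊥ := by
    by_contra h
    push_neg at h
    exact hy0 (funext fun i => not_not.mp (by simpa using h i))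
  set SY : Finset (Fin m) := Finset.univ.filter (fun i => y i ≠ ⊥) with hSYdef
  have hSYne : SY.Nonempty := by
    obtain ⟨i, hi⟩ := hex; exact ⟨i, by simp [hSYdef, hi]⟩
  set δ := SY.sup' hSYne (fun i => sval (y i) + zrow A hArow x i) with hδdef
  have hprim : ∀ i, zrow A hArow x i < gA B P hBrow 1 x i := by
    intro i
    rw [zrow]
    rw [Finset.sup'_lt_iff]
    intro j hj
    have hxj := hx j
    rw [shapley_eq_FA A B P hAcol hBrow] at hxj
    have h2 : FA A B P hAcol hBrow 1 x j ≤ - sval (A i j) + gA B P hBrow 1 x i :=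
      Finset.inf'_le _ (mem_If.2 (mem_Jf.1 hj))
    linarith
  have hkey : ∀ i ∈ SY, sval (y i) + gA B P hBrow 1 x i ≤ δ := by
    intro i hiS
    have hyi : y i ≠ ⊥ := by simpa [hSYdef] using hiS
    obtain ⟨k0, hk0K, hk0max⟩ := Finset.exists_mem_eq_sup' (Kf_ne B hBrow i)
      (fun k => sval (B i k) + 1 * ∑ l, P k l * x l)
    have hne2 : (Finset.univ.filter fun k => B i k ≠ ⊥).Nonempty := by
      obtain ⟨k, hk⟩ := hBrow i; exact ⟨k, by simp [hk]⟩
    have hd : y i ≤ (Finset.univ.filter fun k => B i k ≠ ⊥).inf' hne2 fun k =>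
        if svec A P y k = ⊥ then ⊥
        else ((- sval (B i k) + sval (svec A P y k) : ℝ) : WithBot ℝ) := by
      have h := hyle i
      simp only [dualShapleyT] at h
      rwa [dif_pos hne2] at h
    have hk0K' : k0 ∈ Finset.univ.filter fun k => B i k ≠ ⊥ := by
      have := mem_Kf.1 hk0K; simp [this]
    have hdk : y i ≤ (if svec A P y k0 = ⊥ then ⊥
        else ((- sval (B i k0) + sval (svec A P y k0) : ℝ) : WithBot ℝ)) :=
      le_trans hd (Finset.inf'_le _ hk0K')
    have hsvec : svec A P y k0 ≠ ⊥ := by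
      intro hb
      rw [if_pos hb] at hdk
      exact hyi (le_bot_iff.mp hdk)
    rw [if_neg hsvec] at hdk
    have hdkr : sval (y i) ≤ - sval (B i k0) + sval (svec A P y k0) := by
      have := sval_le_sval hyi hdk
      rwa [sval_coe] at this
    have hC : ¬ ∃ l, 0 < P k0 l ∧ zvec A y l = ⊥ := fun hC => hsvec (by rw [svec, if_pos hC])
    have hz : ∀ l, P k0 l * sval (zvec A y l) ≤ P k0 l * (δ - x l) := by
      intro l
      rcases eq_or_lt_of_le (hPnn k0 l) with h0 | hpos
      · rw [← h0]; simp
      · have hzl : zvec A y l ≠ ⊥ := fun hb => hC ⟨l, hpos, hb⟩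
        have hzle : zvec A y l ≤ ((δ - x l : ℝ) : WithBot ℝ) := by
          rw [zvec]
          apply Finset.sup_le
          intro i' _
          by_cases hAi' : A i' l = ⊥
          · simp [hAi']
          by_cases hyi' : y i' = ⊥
          · simp [hyi']
          rw [← coe_sval hAi', ← coe_sval hyi', ← WithBot.coe_add, WithBot.coe_le_coe]
          have h1 : sval (A i' l) + x l ≤ zrow A hArow x i' :=
            Finset.le_sup' (fun j => sval (A i' j) + x j) (mem_Jf.2 hAi')
          have h2 : sval (y i') + zrow A hArow x i' ≤ δ :=
            Finset.le_sup' (fun i => sval (y i) + zrow A hArow x i)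
              (by simp [hSYdef, hyi'] : i' ∈ SY)
          linarith
        have := sval_le_sval hzl hzle
        rw [sval_coe] at this
        exact mul_le_mul_of_nonneg_left this (le_of_lt hpos)
    have hsv : sval (svec A P y k0) ≤ δ - ∑ l, P k0 l * x l := by
      have hsvv : sval (svec A P y k0) = ∑ l, P k0 l * sval (zvec A y l) := by
        rw [svec, if_neg hC, sval_coe]
      rw [hsvv]
      calc ∑ l, P k0 l * sval (zvec A y l) ≤ ∑ l, P k0 l * (δ - x l) :=
            Finset.sum_le_sum fun l _ => hz l
      _ = δ - ∑ l, P k0 l * x l := by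
            simp only [mul_sub]
            rw [Finset.sum_sub_distrib, ← Finset.sum_mul, hPsum, one_mul]
    have hga : gA B P hBrow 1 x i = sval (B i k0) + ∑ l, P k0 l * x l := by
      rw [gA, hk0max, one_mul]
    linarith
  have hlt : δ < δ := by
    conv_lhs => rw [hδdef]
    rw [Finset.sup'_lt_iff]
    intro i hi
    exact lt_of_lt_of_le (by linarith [hprim i]) (hkey i hi)
  exact lt_irrefl δ hlt

/-- real z-vector `z_l(w) = max_{i : A_il ≠ ⊥} (A_il + w_i)` -/
def zcolR (hAcol : ∀ j, ∃ i, A i j ≠ ⊥) (w : Fin m → ℝ) (l : Fin n) : ℝ :=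
  (If A l).sup' (If_ne A hAcol l) fun i => sval (A i l) + w i

def KA (hm : 0 < m) (hn : 0 < n) : ℝ :=
  (Finset.univ : Finset (Fin m × Fin n)).sup'
    (have : Nonempty (Fin m × Fin n) := ⟨(⟨0, hm⟩, ⟨0, hn⟩)⟩
     Finset.univ_nonempty) fun p => |sval (A p.1 p.2)|

def KB (hm : 0 < m) (hq : 0 < q) : ℝ :=
  (Finset.univ : Finset (Fin m × Fin q)).sup'
    (have : Nonempty (Fin m × Fin q) := ⟨(⟨0, hm⟩, ⟨0, hq⟩)⟩
     Finset.univ_nonempty) fun p => |sval (B p.1 p.2)|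

lemma abs_le_KA (hm : 0 < m) (hn : 0 < n) (i : Fin m) (j : Fin n) :
    |sval (A i j)| ≤ KA A hm hn :=
  Finset.le_sup' (fun p : Fin m × Fin n => |sval (A p.1 p.2)|) (Finset.mem_univ (i, j))

lemma KA_nonneg (hm : 0 < m) (hn : 0 < n) : 0 ≤ KA A hm hn :=
  le_trans (abs_nonneg _) (abs_le_KA A hm hn ⟨0, hm⟩ ⟨0, hn⟩)

lemma abs_le_KB (hm : 0 < m) (hq : 0 < q) (i : Fin m) (k : Fin q) :
    |sval (B i k)| ≤ KB B hm hq :=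
  Finset.le_sup' (fun p : Fin m × Fin q => |sval (B p.1 p.2)|) (Finset.mem_univ (i, k))

lemma zcolR_le (hAcol : ∀ j, ∃ i, A i j ≠ ⊥) (hm : 0 < m) (hn : 0 < n)
    (w : Fin m → ℝ) (hw : ∀ i, w i ≤ 0) (l : Fin n) :
    zcolR A hAcol w l ≤ KA A hm hn := by
  apply Finset.sup'_le
  intro i _
  have h1 := (abs_le.mp (abs_le_KA A hm hn i l)).2
  have := hw i
  linarith

lemma zcolR_shift (hAcol : ∀ j, ∃ i, A i j ≠ ⊥) (w : Fin m → ℝ) (c : ℝ) (l : Fin n) :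
    zcolR A hAcol (fun i => w i + c) l = zcolR A hAcol w l + c := by
  rw [zcolR, zcolR, Finset.sup'_add]
  exact Finset.sup'_congr _ rfl fun i _ => by ring

/-- the key construction: an approximate dual subeigenvector from the discounted game -/
lemma key_alpha (hm : 0 < m) (hn : 0 < n) (hq : 0 < q)
    (hAcol : ∀ j, ∃ i, A i j ≠ ⊥) (hArow : ∀ i, ∃ j, A i j ≠ ⊥)
    (hBrow : ∀ i, ∃ k, B i k ≠ ⊥) (hPnn : ∀ k l, 0 ≤ P k l) (hPsum : ∀ k, ∑ l, P k l = 1)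
    (hF : ¬ FeasR (shapley A B P)) {α : ℝ} (hα0 : 0 < α) (hα1 : α < 1) :
    ∃ Y : Fin m → ℝ,
      (∀ i, ∀ k ∈ Kf B i, Y i ≤ - sval (B i k) + (∑ l, P k l * zcolR A hAcol Y l)
          + (1 - α)/α * (KB B hm hq + - Y i)) ∧ (∃ i, - KA A hm hn ≤ Y i) := by
  classical
  -- the discounted operator is a contraction
  have hαnn : 0 ≤ α := le_of_lt hα0
  have hlip : ∀ x y : Fin n → ℝ, dist (FA A B P hAcol hBrow α x) (FA A B P hAcol hBrow α y)
      ≤ α * dist x y := by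
    intro x y
    have hsum : ∀ k, |(∑ l, P k l * x l) - ∑ l, P k l * y l| ≤ dist x y := by
      intro k
      rw [← Finset.sum_sub_distrib]
      calc |∑ l, (P k l * x l - P k l * y l)| ≤ ∑ l, |P k l * x l - P k l * y l| :=
            Finset.abs_sum_le_sum_abs _ _
      _ ≤ ∑ l, P k l * dist x y := by
          apply Finset.sum_le_sum; intro l _
          rw [← mul_sub, abs_mul, abs_of_nonneg (hPnn k l)]
          exact mul_le_mul_of_nonneg_left
            (Real.dist_eq (x l) (y l) ▸ dist_le_pi_dist x y l) (hPnn k l)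
      _ = dist x y := by rw [← Finset.sum_mul, hPsum, one_mul]
    have hg : ∀ i, |gA B P hBrow α x i - gA B P hBrow α y i| ≤ α * dist x y := by
      intro i
      rw [abs_sub_le_iff]
      constructor
      · rw [sub_le_iff_le_add, add_comm]
        apply sup'_le_sup'_add
        intro k _
        have h1 := (abs_le.mp (hsum k)).2
        have h2 : α * ((∑ l, P k l * x l) - ∑ l, P k l * y l) ≤ α * dist x y :=
          mul_le_mul_of_nonneg_left (le_trans (le_abs_self _) (hsum k)) hαnn
        nlinarith [mul_le_mul_of_nonneg_left (hsum k) hαnn]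
      · rw [sub_le_iff_le_add, add_comm]
        apply sup'_le_sup'_add
        intro k _
        nlinarith [mul_le_mul_of_nonneg_left (hsum k) hαnn, abs_nonneg ((∑ l, P k l * x l) - ∑ l, P k l * y l), neg_abs_le ((∑ l, P k l * x l) - ∑ l, P k l * y l)]
    have hcoord : ∀ j, |FA A B P hAcol hBrow α x j - FA A B P hAcol hBrow α y j| ≤ α * dist x y := by
      intro j
      rw [abs_sub_le_iff]
      constructor
      · rw [sub_le_iff_le_add, add_comm]
        apply inf'_le_inf'_add
        intro i _
        have := (abs_le.mp (hg i)).2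
        linarith
      · rw [sub_le_iff_le_add, add_comm]
        apply inf'_le_inf'_add
        intro i _
        have := (abs_le.mp (hg i)).1
        linarith
    rw [dist_pi_le_iff (by positivity)]
    intro j
    rw [Real.dist_eq]
    exact hcoord j
  obtain ⟨x, hxfix⟩ : ∃ x : Fin n → ℝ, FA A B P hAcol hBrow α x = x := by
    have hc : ContractingWith ⟨α, hαnn⟩ (fun x => FA A B P hAcol hBrow α x) := by
      constructor
      · exact_mod_cast hα1
      · exact LipschitzWith.of_dist_le_mul fun x y => hlip x y
    exact ⟨hc.fixedPoint _, hc.fixedPoint_isFixedPt⟩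
  haveI : Nonempty (Fin n) := Fin.pos_iff_nonempty.mp hn
  -- some coordinate of the fixed point is ≤ 0, else the undiscounted game is feasible
  have hminle : ∃ l, x l ≤ 0 := by
    by_contra h
    push_neg at h
    apply hF
    refine ⟨x, fun j => ?_⟩
    rw [shapley_eq_FA A B P hAcol hBrow]
    set m0 := Finset.univ.inf' Finset.univ_nonempty x with hm0
    have hm0pos : 0 < m0 := by
      obtain ⟨l, _, hEq⟩ := Finset.exists_mem_eq_inf' (Finset.univ_nonempty) x
      rw [hm0, hEq]; exact h l
    have hstep : FA A B P hAcol hBrow α x j ≤ FA A B P hAcol hBrow 1 x j + (-((1 - α) * m0)) := by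
      apply inf'_le_inf'_add
      intro i _
      have hgi : gA B P hBrow α x i ≤ gA B P hBrow 1 x i + (-((1 - α) * m0)) := by
        apply sup'_le_sup'_add
        intro k _
        have hPx : m0 ≤ ∑ l, P k l * x l := by
          calc m0 = ∑ l, P k l * m0 := by rw [← Finset.sum_mul, hPsum, one_mul]
          _ ≤ ∑ l, P k l * x l := Finset.sum_le_sum fun l _ =>
              mul_le_mul_of_nonneg_left (Finset.inf'_le x (Finset.mem_univ l)) (hPnn k l)
        nlinarith [mul_le_mul_of_nonneg_left hPx (sub_nonneg.2 (le_of_lt hα1))]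
      linarith
    have hxj : x j = FA A B P hAcol hBrow α x j := (congrFun hxfix j).symm
    have : 0 < (1 - α) * m0 := by nlinarith
    linarith
  set Y : Fin m → ℝ := fun i => - gA B P hBrow α x i with hYdef
  have hzY : ∀ l, zcolR A hAcol Y l = - x l := by
    intro l
    have h1 : zcolR A hAcol Y l = - FA A B P hAcol hBrow α x l := by
      rw [FA, neg_inf']
      exact Finset.sup'_congr _ rfl fun i _ => by rw [hYdef]; ring
    rw [h1, congrFun hxfix l]
  refine ⟨Y, ?_, ?_⟩
  · intro i k hk
    have hkB : B i k ≠ ⊥ := mem_Kf.1 hk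
    have hg1 : sval (B i k) + 1 * ∑ l, P k l * x l ≤ gA B P hBrow 1 x i :=
      Finset.le_sup' (fun k => sval (B i k) + 1 * ∑ l, P k l * x l) hk
    -- the epsilon bound
    obtain ⟨k2, hk2K, hk2max⟩ := Finset.exists_mem_eq_sup' (Kf_ne B hBrow i)
      (fun k => sval (B i k) + 1 * ∑ l, P k l * x l)
    have h2 : sval (B i k2) + α * ∑ l, P k2 l * x l ≤ gA B P hBrow α x i :=
      Finset.le_sup' (fun k => sval (B i k) + α * ∑ l, P k l * x l) hk2K
    have h3 : gA B P hBrow 1 x i - gA B P hBrow α x i ≤ (1 - α) * ∑ l, P k2 l * x l := by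
      have hg1i : gA B P hBrow 1 x i = sval (B i k2) + 1 * ∑ l, P k2 l * x l := by
        rw [gA, hk2max]
      rw [hg1i]; linarith
    have hKB2 : - sval (B i k2) ≤ KB B hm hq :=
      le_trans (neg_le_abs _) (abs_le_KB B hm hq i k2)
    have h4 : α * ∑ l, P k2 l * x l ≤ gA B P hBrow α x i + KB B hm hq := by linarith
    have h5 : (1 - α) * ∑ l, P k2 l * x l
        ≤ (1 - α)/α * (KB B hm hq + gA B P hBrow α x i) := by
      have hfac : 0 ≤ (1 - α)/α := div_nonneg (by linarith) hαnn
      have := mul_le_mul_of_nonneg_left h4 hfac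
      have hid : (1 - α)/α * (α * ∑ l, P k2 l * x l) = (1 - α) * ∑ l, P k2 l * x l := by
        field_simp
      rw [hid] at this
      linarith
    have hsumz : ∑ l, P k l * zcolR A hAcol Y l = - ∑ l, P k l * x l := by
      rw [← Finset.sum_neg_distrib]
      exact Finset.sum_congr rfl fun l _ => by rw [hzY l]; ring
    rw [hsumz, hYdef]
    have heps : gA B P hBrow 1 x i - gA B P hBrow α x i
        ≤ (1 - α)/α * (KB B hm hq + gA B P hBrow α x i) := le_trans h3 h5
    simp only
    linarith
  · obtain ⟨l0, hl0⟩ := hminle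
    obtain ⟨i0, hi0, heq⟩ := Finset.exists_mem_eq_inf' (If_ne A hAcol l0)
      (fun i => - sval (A i l0) + gA B P hBrow α x i)
    have hx0 : x l0 = - sval (A i0 l0) + gA B P hBrow α x i0 := by
      rw [← congrFun hxfix l0, FA, heq]
    refine ⟨i0, ?_⟩
    have hKA : sval (A i0 l0) ≤ KA A hm hn :=
      le_trans (le_abs_self _) (abs_le_KA A hm hn i0 l0)
    rw [hYdef]
    simp only
    linarith


open Filter Topology in
lemma case_bot (hm : 0 < m) (hn : 0 < n) (hq : 0 < q)
    (hAcol : ∀ j, ∃ i, A i j ≠ ⊥) (hBrow : ∀ i, ∃ k, B i k ≠ ⊥)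
    (hPnn : ∀ k l, 0 ≤ P k l) (hPsum : ∀ k, ∑ l, P k l = 1)
    (U : ℕ → Fin m → ℝ) (hU0 : ∀ N i, U N i ≤ 0)
    (hUineq : ∀ N i, ∀ k ∈ Kf B i, U N i ≤ - sval (B i k)
      + (∑ l, P k l * zcolR A hAcol (U N) l)
      + 1/((N:ℝ)+1) * ((KB B hm hq + KA A hm hn) - U N i))
    (φ : ℕ → ℕ) (v : Fin m → ℝ)
    (hvi : ∀ i, Tendsto (fun N => Real.exp (U (φ N) i)) atTop (𝓝 (v i)))
    (hUlim : ∀ i, v i ≠ 0 → Tendsto (fun N => U (φ N) i) atTop (𝓝 (Real.log (v i))))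
    (hUbot : ∀ i, v i = 0 → ∀ M : ℝ, ∀ᶠ N in atTop, U (φ N) i < M)
    (herr : ∀ i, v i ≠ 0 → Tendsto
      (fun N => 1/((φ N : ℝ)+1) * ((KB B hm hq + KA A hm hn) - U (φ N) i)) atTop (𝓝 0))
    (u : Fin m → WithBot ℝ)
    (hudef : u = fun i => if v i = 0 then ⊥ else ((Real.log (v i) : ℝ) : WithBot ℝ))
    (i : Fin m) (hvz : ¬ v i = 0) (k : Fin q) (hk : k ∈ Kf B i)
    (hs : svec A P u k = ⊥) : False := by
  classical
  have hC : ∃ l, 0 < P k l ∧ zvec A u l = ⊥ := by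
    by_contra hC
    rw [svec, if_neg hC] at hs
    exact WithBot.coe_ne_bot hs
  obtain ⟨l0, hPl0, hzl0⟩ := hC
  have hall : ∀ i', A i' l0 ≠ ⊥ → v i' = 0 := by
    intro i' hAi'
    have h1 : A i' l0 + u i' = ⊥ :=
      (Finset.sup_eq_bot_iff _ _).1 hzl0 i' (Finset.mem_univ i')
    rcases WithBot.add_eq_bot.1 h1 with h | h
    · exact absurd h hAi'
    · by_contra hv
      rw [hudef] at h
      simp only [hv, if_false] at h
      exact WithBot.coe_ne_bot h
  set Li := Real.log (v i) with hLi
  set KAc := KA A hm hn with hKAc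
  have hKAc0 : 0 ≤ KAc := KA_nonneg A hm hn
  set c0 : ℝ := Li - 2 + sval (B i k) with hc0
  have hzK : ∀ N l, zcolR A hAcol (U N) l ≤ KAc :=
    fun N l => zcolR_le A hAcol hm hn (U N) (hU0 N) l
  -- eventual lower bound on the sum
  have hlow : ∀ᶠ N in atTop, c0 ≤ ∑ l, P k l * zcolR A hAcol (U (φ N)) l := by
    have h1 : ∀ᶠ N in atTop, Li - 1 < U (φ N) i :=
      (hUlim i hvz).eventually_const_lt (by linarith)
    have h2 : ∀ᶠ N in atTop,
        1/((φ N:ℝ)+1) * ((KB B hm hq + KA A hm hn) - U (φ N) i) < 1 :=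
      (herr i hvz).eventually_lt_const one_pos
    filter_upwards [h1, h2] with N h1N h2N
    have h3 := hUineq (φ N) i k hk
    rw [hc0]
    linarith
  -- eventual upper bound on the sum
  set Mt : ℝ := (c0 - 1 - KAc)/(P k l0) - KAc with hMt
  have hupp : ∀ᶠ N in atTop, ∑ l, P k l * zcolR A hAcol (U (φ N)) l ≤ c0 - 1 := by
    have hev2 : ∀ᶠ N in atTop, ∀ i' ∈ If A l0, U (φ N) i' < Mt := by
      rw [Filter.eventually_all_finset]
      intro i' hi'
      exact hUbot i' (hall i' (mem_If.1 hi')) Mt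
    filter_upwards [hev2] with N hN
    have hz0 : zcolR A hAcol (U (φ N)) l0 ≤ KAc + Mt := by
      apply Finset.sup'_le
      intro i' hi'
      have h1 : sval (A i' l0) ≤ KAc :=
        le_trans (le_abs_self _) (abs_le_KA A hm hn i' l0)
      have := hN i' hi'
      linarith
    have hsplit : ∑ l, P k l * zcolR A hAcol (U (φ N)) l
        = (∑ l ∈ Finset.univ.erase l0, P k l * zcolR A hAcol (U (φ N)) l)
          + P k l0 * zcolR A hAcol (U (φ N)) l0 :=
      (Finset.sum_erase_add _ _ (Finset.mem_univ l0)).symm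
    have hrest : ∑ l ∈ Finset.univ.erase l0, P k l * zcolR A hAcol (U (φ N)) l ≤ KAc := by
      calc ∑ l ∈ Finset.univ.erase l0, P k l * zcolR A hAcol (U (φ N)) l
          ≤ ∑ l ∈ Finset.univ.erase l0, P k l * KAc :=
            Finset.sum_le_sum fun l _ =>
              mul_le_mul_of_nonneg_left (hzK (φ N) l) (hPnn k l)
      _ ≤ ∑ l, P k l * KAc := Finset.sum_le_sum_of_subset_of_nonneg
            (Finset.subset_univ _) fun l _ _ => mul_nonneg (hPnn k l) hKAc0
      _ = KAc := by rw [← Finset.sum_mul, hPsum, one_mul]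
    have hl0 : P k l0 * zcolR A hAcol (U (φ N)) l0 ≤ P k l0 * (KAc + Mt) :=
      mul_le_mul_of_nonneg_left hz0 (le_of_lt hPl0)
    have hMt2 : P k l0 * (KAc + Mt) = c0 - 1 - KAc := by
      rw [hMt]
      field_simp
      ring
    rw [hsplit]
    linarith
  obtain ⟨N, hN1, hN2⟩ := (hlow.and hupp).exists
  linarith

open Filter Topology in
lemma case_real (hm : 0 < m) (hn : 0 < n) (hq : 0 < q)
    (hAcol : ∀ j, ∃ i, A i j ≠ ⊥) (hBrow : ∀ i, ∃ k, B i k ≠ ⊥)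
    (hPnn : ∀ k l, 0 ≤ P k l) (hPsum : ∀ k, ∑ l, P k l = 1)
    (U : ℕ → Fin m → ℝ) (hU0 : ∀ N i, U N i ≤ 0)
    (hUineq : ∀ N i, ∀ k ∈ Kf B i, U N i ≤ - sval (B i k)
      + (∑ l, P k l * zcolR A hAcol (U N) l)
      + 1/((N:ℝ)+1) * ((KB B hm hq + KA A hm hn) - U N i))
    (φ : ℕ → ℕ) (v : Fin m → ℝ)
    (hvi : ∀ i, Tendsto (fun N => Real.exp (U (φ N) i)) atTop (𝓝 (v i)))
    (hUlim : ∀ i, v i ≠ 0 → Tendsto (fun N => U (φ N) i) atTop (𝓝 (Real.log (v i))))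
    (hUbot : ∀ i, v i = 0 → ∀ M : ℝ, ∀ᶠ N in atTop, U (φ N) i < M)
    (herr : ∀ i, v i ≠ 0 → Tendsto
      (fun N => 1/((φ N : ℝ)+1) * ((KB B hm hq + KA A hm hn) - U (φ N) i)) atTop (𝓝 0))
    (u : Fin m → WithBot ℝ)
    (hudef : u = fun i => if v i = 0 then ⊥ else ((Real.log (v i) : ℝ) : WithBot ℝ))
    (i : Fin m) (hvz : ¬ v i = 0) (k : Fin q) (hk : k ∈ Kf B i)
    (hs : svec A P u k ≠ ⊥) :
    Real.log (v i) ≤ - sval (B i k) + sval (svec A P u k) := by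
  classical
  have hC : ¬ ∃ l, 0 < P k l ∧ zvec A u l = ⊥ := fun hC => hs (by rw [svec, if_pos hC])
  have hsval : sval (svec A P u k) = ∑ l, P k l * sval (zvec A u l) := by
    rw [svec, if_neg hC, sval_coe]
  by_contra hlt
  push_neg at hlt
  set R : ℝ := - sval (B i k) + sval (svec A P u k) with hR
  set δ : ℝ := (Real.log (v i) - R)/4 with hδ
  have hδpos : 0 < δ := by rw [hδ]; linarith
  -- eventual per-coordinate upper bound on the z-values
  have hev : ∀ l : Fin n, ∀ᶠ N in atTop,
      P k l * zcolR A hAcol (U (φ N)) l ≤ P k l * (sval (zvec A u l) + δ) := by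
    intro l
    rcases eq_or_lt_of_le (hPnn k l) with h0 | hpos
    · exact Filter.Eventually.of_forall fun N => by rw [← h0]; simp
    · have hzne : zvec A u l ≠ ⊥ := fun hb => hC ⟨l, hpos, hb⟩
      have hev2 : ∀ᶠ N in atTop, ∀ i' ∈ If A l,
          sval (A i' l) + U (φ N) i' ≤ sval (zvec A u l) + δ := by
        rw [Filter.eventually_all_finset]
        intro i' hi'
        have hAi' : A i' l ≠ ⊥ := mem_If.1 hi'
        have hKAi' : sval (A i' l) ≤ KA A hm hn :=
          le_trans (le_abs_self _) (abs_le_KA A hm hn i' l)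
        by_cases hv' : v i' = 0
        · filter_upwards [hUbot i' hv' (sval (zvec A u l) + δ - KA A hm hn)] with N hN
          linarith
        · have hle : sval (A i' l) + Real.log (v i') ≤ sval (zvec A u l) := by
            have h1 : A i' l + u i' ≤ zvec A u l := by
              rw [zvec]; exact Finset.le_sup (f := fun i'' => A i'' l + u i'') (Finset.mem_univ i')
            have hui' : u i' = ((Real.log (v i') : ℝ) : WithBot ℝ) := by
              rw [hudef]; simp [hv']
            rw [hui', ← coe_sval hAi', ← WithBot.coe_add] at h1
            have h2 := sval_le_sval (WithBot.coe_ne_bot) h1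
            rwa [sval_coe] at h2
          have h2 : ∀ᶠ N in atTop, U (φ N) i' < Real.log (v i') + δ :=
            (hUlim i' hv').eventually_lt_const (by linarith)
          filter_upwards [h2] with N hN
          linarith
      filter_upwards [hev2] with N hN
      have hsup : zcolR A hAcol (U (φ N)) l ≤ sval (zvec A u l) + δ :=
        Finset.sup'_le _ _ fun i' hi' => hN i' hi'
      exact mul_le_mul_of_nonneg_left hsup (le_of_lt hpos)
  have hevsum : ∀ᶠ N in atTop,
      ∑ l, P k l * zcolR A hAcol (U (φ N)) l ≤ sval (svec A P u k) + δ := by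
    have hall : ∀ᶠ N in atTop, ∀ l ∈ (Finset.univ : Finset (Fin n)),
        P k l * zcolR A hAcol (U (φ N)) l ≤ P k l * (sval (zvec A u l) + δ) := by
      rw [Filter.eventually_all_finset]
      intro l _
      exact hev l
    filter_upwards [hall] with N hN
    calc ∑ l, P k l * zcolR A hAcol (U (φ N)) l
        ≤ ∑ l, P k l * (sval (zvec A u l) + δ) :=
          Finset.sum_le_sum fun l hl => hN l hl
    _ = (∑ l, P k l * sval (zvec A u l)) + δ := by
        simp only [mul_add]
        rw [Finset.sum_add_distrib, ← Finset.sum_mul, hPsum, one_mul]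
    _ = sval (svec A P u k) + δ := by rw [hsval]
  have h1 : ∀ᶠ N in atTop, Real.log (v i) - δ < U (φ N) i :=
    (hUlim i hvz).eventually_const_lt (by linarith)
  have h2 : ∀ᶠ N in atTop,
      1/((φ N:ℝ)+1) * ((KB B hm hq + KA A hm hn) - U (φ N) i) < δ :=
    (herr i hvz).eventually_lt_const hδpos
  obtain ⟨N, hN1, hN2, hN3⟩ := (h1.and (h2.and hevsum)).exists
  have h3 := hUineq (φ N) i k hk
  rw [hδ] at hδpos
  have : Real.log (v i) - R ≤ 3 * ((Real.log (v i) - R)/4) := by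
    have hδeq : δ = (Real.log (v i) - R)/4 := hδ
    rw [hR] at *
    linarith
  linarith

/-- strong duality -/
theorem strong_duality (hm : 0 < m) (hn : 0 < n) (hq : 0 < q)
    (hAcol : ∀ j, ∃ i, A i j ≠ ⊥) (hArow : ∀ i, ∃ j, A i j ≠ ⊥)
    (hBrow : ∀ i, ∃ k, B i k ≠ ⊥) (hPnn : ∀ k l, 0 ≤ P k l) (hPsum : ∀ k, ∑ l, P k l = 1)
    (hF : ¬ FeasR (shapley A B P)) : FeasT (dualShapleyT A B P) := by
  classical
  haveI hmne : Nonempty (Fin m) := Fin.pos_iff_nonempty.mp hm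
  open Filter Topology in
  -- discount factors tending to 1
  have hα0 : ∀ N : ℕ, (0:ℝ) < ((N:ℝ) + 1)/((N:ℝ) + 2) := fun N => by positivity
  have hα1 : ∀ N : ℕ, ((N:ℝ) + 1)/((N:ℝ) + 2) < 1 := fun N => by
    rw [div_lt_one (by positivity)]; linarith
  have hαq : ∀ N : ℕ, (1 - ((N:ℝ) + 1)/((N:ℝ) + 2))/(((N:ℝ) + 1)/((N:ℝ) + 2))
      = 1/((N:ℝ)+1) := fun N => by
    have h2 : ((N:ℝ) + 2) ≠ 0 := by positivity
    have h1 : ((N:ℝ) + 1) ≠ 0 := by positivity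
    field_simp
    ring
  choose Y hY1 hY2 using fun N : ℕ =>
    key_alpha A B P hm hn hq hAcol hArow hBrow hPnn hPsum hF (hα0 N) (hα1 N)
  set KAB : ℝ := KB B hm hq + KA A hm hn with hKAB
  set t : ℕ → ℝ := fun N => Finset.univ.sup' Finset.univ_nonempty (Y N) with htdef
  set U : ℕ → Fin m → ℝ := fun N i => Y N i - t N with hUdef
  have hU0 : ∀ N i, U N i ≤ 0 := fun N i =>
    sub_nonpos.2 (Finset.le_sup' (Y N) (Finset.mem_univ i))
  have htK : ∀ N, - KA A hm hn ≤ t N := fun N => by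
    obtain ⟨i, hi⟩ := hY2 N
    exact le_trans hi (Finset.le_sup' (Y N) (Finset.mem_univ i))
  have hUmax : ∀ N, ∃ i, U N i = 0 := fun N => by
    obtain ⟨i, _, hEq⟩ := Finset.exists_mem_eq_sup' (Finset.univ_nonempty) (Y N)
    exact ⟨i, by simp only [hUdef, htdef, ← hEq, sub_self]⟩
  -- main inequality in normalized coordinates
  have hUineq : ∀ N i, ∀ k ∈ Kf B i, U N i ≤ - sval (B i k)
      + (∑ l, P k l * zcolR A hAcol (U N) l) + 1/((N:ℝ)+1) * (KAB - U N i) := by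
    intro N i k hk
    have h1 := hY1 N i k hk
    rw [hαq N] at h1
    have hz : ∀ l, zcolR A hAcol (U N) l = zcolR A hAcol (Y N) l + (- t N) := by
      intro l
      rw [← zcolR_shift A hAcol (Y N) (- t N) l]
      congr 1
    have hsz : ∑ l, P k l * zcolR A hAcol (U N) l
        = (∑ l, P k l * zcolR A hAcol (Y N) l) - t N := by
      simp only [hz, mul_add]
      rw [Finset.sum_add_distrib, ← Finset.sum_mul, hPsum, one_mul]
      ring
    rw [hsz]
    have hquot : (0:ℝ) ≤ 1/((N:ℝ)+1) := by positivity
    have hUY : U N i = Y N i - t N := rfl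
    have hbd : KB B hm hq - Y N i ≤ KAB - U N i := by
      rw [hKAB, hUY]
      have := htK N
      linarith
    have := mul_le_mul_of_nonneg_left hbd hquot
    linarith
  -- compactness of the normalized exponentials
  set V : ℕ → Fin m → ℝ := fun N i => Real.exp (U N i) with hVdef
  have hVmem : ∀ N, V N ∈ Set.Icc (0 : Fin m → ℝ) 1 := fun N =>
    ⟨fun i => (Real.exp_pos _).le, fun i => Real.exp_le_one_iff.2 (hU0 N i)⟩
  obtain ⟨v, hvmem, φ, hφ, hφlim⟩ := isCompact_Icc.tendsto_subseq hVmem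
  have hvi : ∀ i, Tendsto (fun N => V (φ N) i) atTop (𝓝 (v i)) :=
    fun i => tendsto_pi_nhds.1 hφlim i
  have hv0 : ∀ i, 0 ≤ v i := fun i => (Set.mem_Icc.1 hvmem).1 i
  -- limits of the normalized coordinates
  have hUlim : ∀ i, v i ≠ 0 → Tendsto (fun N => U (φ N) i) atTop (𝓝 (Real.log (v i))) := by
    intro i hne
    have h1 : Tendsto (fun N => Real.log (V (φ N) i)) atTop (𝓝 (Real.log (v i))) :=
      (Real.continuousAt_log hne).tendsto.comp (hvi i)
    simpa only [hVdef, Real.log_exp] using h1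
  have hUbot : ∀ i, v i = 0 → ∀ M : ℝ, ∀ᶠ N in atTop, U (φ N) i < M := by
    intro i hvz M
    have h0 : Tendsto (fun N => V (φ N) i) atTop (𝓝 0) := hvz ▸ hvi i
    have h1 : ∀ᶠ N in atTop, V (φ N) i < Real.exp M :=
      h0.eventually_lt_const (Real.exp_pos M)
    filter_upwards [h1] with N hN
    have : Real.exp (U (φ N) i) < Real.exp M := hN
    exact Real.exp_lt_exp.1 this
  -- error term vanishes along the subsequence
  have herr : ∀ i, v i ≠ 0 →
      Tendsto (fun N => 1/((φ N : ℝ)+1) * (KAB - U (φ N) i)) atTop (𝓝 0) := by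
    intro i hne
    have h1 : Tendsto (fun N => 1/((φ N : ℝ)+1)) atTop (𝓝 0) := by
      apply squeeze_zero (fun N => by positivity) (g := fun N : ℕ => 1/((N:ℝ)+1))
      · intro N
        apply one_div_le_one_div_of_le (by positivity)
        have : (N:ℝ) ≤ (φ N : ℝ) := by exact_mod_cast hφ.le_apply
        linarith
      · exact tendsto_one_div_add_atTop_nhds_zero_nat
    have h2 : Tendsto (fun N => KAB - U (φ N) i) atTop (𝓝 (KAB - Real.log (v i))) :=
      tendsto_const_nhds.sub (hUlim i hne)
    have := h1.mul h2
    simpa using this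
  -- there is a coordinate with v i = 1
  have hvone : ∃ i, v i = 1 := by
    by_contra h
    push_neg at h
    have hvlt : ∀ i, v i < 1 := fun i => lt_of_le_of_ne ((Set.mem_Icc.1 hvmem).2 i) (h i)
    have hev : ∀ᶠ N in atTop, ∀ i, V (φ N) i < 1 :=
      eventually_all.2 fun i => (hvi i).eventually_lt_const (hvlt i)
    obtain ⟨N, hN⟩ := hev.exists
    obtain ⟨i, hi⟩ := hUmax (φ N)
    have : V (φ N) i = 1 := by rw [hVdef]; simp only [hi, Real.exp_zero]
    exact absurd (this ▸ hN i) (lt_irrefl 1)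
  -- the dual certificate
  set u : Fin m → WithBot ℝ := fun i =>
    if v i = 0 then ⊥ else ((Real.log (v i) : ℝ) : WithBot ℝ) with hudef
  refine ⟨u, ?_, ?_⟩
  · obtain ⟨i1, hi1⟩ := hvone
    intro hbot
    have : u i1 = ⊥ := congrFun hbot i1
    rw [hudef] at this
    simp only [hi1, one_ne_zero, if_false] at this
    exact WithBot.coe_ne_bot this
  · intro i
    by_cases hvz : v i = 0
    · rw [hudef]; simp only [hvz, if_pos rfl]; exact bot_le
    have hupos : 0 < v i := lt_of_le_of_ne (hv0 i) (Ne.symm hvz)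
    have hui : u i = ((Real.log (v i) : ℝ) : WithBot ℝ) := by rw [hudef]; simp [hvz]
    rw [hui]
    have hne2 : (Finset.univ.filter fun k => B i k ≠ ⊥).Nonempty := by
      obtain ⟨k, hk⟩ := hBrow i; exact ⟨k, by simp [hk]⟩
    show ((Real.log (v i) : ℝ) : WithBot ℝ) ≤ dualShapleyT A B P u i
    simp only [dualShapleyT]
    rw [dif_pos hne2]
    rw [Finset.le_inf'_iff]
    intro k hkf
    have hk : k ∈ Kf B i := by
      have : B i k ≠ ⊥ := by simpa using hkf
      exact mem_Kf.2 this
    by_cases hs : svec A P u k = ⊥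
    · exfalso
      exact case_bot A B P hm hn hq hAcol hBrow hPnn hPsum U hU0 hUineq φ v hvi hUlim hUbot herr
        u hudef i hvz k hk hs
    · rw [if_neg hs]
      rw [WithBot.coe_le_coe]
      exact case_real A B P hm hn hq hAcol hBrow hPnn hPsum U hU0 hUineq φ v hvi hUlim hUbot herr
        u hudef i hvz k hk hs


section shift
variable (w : Fin m → ℝ)

/-- the `B` matrix of the shifted game realizing `pertT w F*` -/
def Bs : Fin m → Fin q → WithBot ℝ := fun i k => B i k + ((- w i : ℝ) : WithBot ℝ)

lemma Bs_ne_bot {i k} : Bs B w i k ≠ ⊥ ↔ B i k ≠ ⊥ := by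
  simp [Bs, WithBot.add_eq_bot]

lemma hBrowS (hBrow : ∀ i, ∃ k, B i k ≠ ⊥) : ∀ i, ∃ k, Bs B w i k ≠ ⊥ := fun i => by
  obtain ⟨k, hk⟩ := hBrow i; exact ⟨k, (Bs_ne_bot B w).2 hk⟩

lemma Kf_Bs (i : Fin m) : Kf (Bs B w) i = Kf B i := by
  ext k; simp only [mem_Kf, Bs_ne_bot]

lemma sval_Bs {i k} (hk : B i k ≠ ⊥) : sval (Bs B w i k) = sval (B i k) - w i := by
  rw [Bs, sval_add_coe _ hk, sub_eq_add_neg]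

lemma gA_Bs (hBrow : ∀ i, ∃ k, B i k ≠ ⊥) (α : ℝ) (x : Fin n → ℝ) (i : Fin m) :
    gA (Bs B w) P (hBrowS B w hBrow) α x i = gA B P hBrow α x i - w i := by
  unfold gA
  have h1 : ∀ k ∈ Kf (Bs B w) i, sval (Bs B w i k) + α * ∑ l, P k l * x l
      = (fun k => (sval (B i k) + α * ∑ l, P k l * x l) + -(w i)) k := by
    intro k hk
    rw [sval_Bs B w (mem_Kf.1 ((Kf_Bs B w i) ▸ hk))]
    ring
  rw [Finset.sup'_congr (Kf_ne (Bs B w) (hBrowS B w hBrow) i) (Kf_Bs B w i) h1,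
    ← Finset.sup'_add, sub_eq_add_neg]

lemma shapley_Bs_le (hAcol : ∀ j, ∃ i, A i j ≠ ⊥) (hBrow : ∀ i, ∃ k, B i k ≠ ⊥)
    (c : ℝ) (hc : ∀ i, - w i ≤ c) (x : Fin n → ℝ) (j : Fin n) :
    shapley A (Bs B w) P x j ≤ shapley A B P x j + c := by
  rw [show shapley A B P x = FA A B P hAcol hBrow 1 x from shapley_eq_FA A B P hAcol hBrow x,
    show shapley A (Bs B w) P x = FA A (Bs B w) P hAcol (hBrowS B w hBrow) 1 x from
      shapley_eq_FA A (Bs B w) P hAcol (hBrowS B w hBrow) x]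
  unfold FA
  apply inf'_le_inf'_add
  intro i _
  rw [gA_Bs B P w hBrow]
  have := hc i; linarith

lemma shapley_Bs_ge (hAcol : ∀ j, ∃ i, A i j ≠ ⊥) (hBrow : ∀ i, ∃ k, B i k ≠ ⊥)
    (c : ℝ) (hc : ∀ i, c ≤ - w i) (x : Fin n → ℝ) (j : Fin n) :
    shapley A B P x j + c ≤ shapley A (Bs B w) P x j := by
  have h : shapley A B P x j ≤ shapley A (Bs B w) P x j + (-c) := by
    rw [show shapley A B P x = FA A B P hAcol hBrow 1 x from shapley_eq_FA A B P hAcol hBrow x,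
      show shapley A (Bs B w) P x = FA A (Bs B w) P hAcol (hBrowS B w hBrow) 1 x from
        shapley_eq_FA A (Bs B w) P hAcol (hBrowS B w hBrow) x]
    unfold FA
    apply inf'_le_inf'_add
    intro i _
    rw [gA_Bs B P w hBrow]
    have := hc i; linarith
  linarith

lemma pertT_dual_eq (hBrow : ∀ i, ∃ k, B i k ≠ ⊥) :
    pertT w (dualShapleyT A B P) = dualShapleyT A (Bs B w) P := by
  classical
  funext y i
  unfold pertT dualShapleyT
  have hset : (Finset.univ.filter fun k => Bs B w i k ≠ ⊥)
      = (Finset.univ.filter fun k => B i k ≠ ⊥) := by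
    ext k; simp [Bs_ne_bot]
  have h2 : (Finset.univ.filter fun k => B i k ≠ ⊥).Nonempty := by
    obtain ⟨k, hk⟩ := hBrow i; exact ⟨k, by simp [hk]⟩
  have h1 : (Finset.univ.filter fun k => Bs B w i k ≠ ⊥).Nonempty := by
    rw [hset]; exact h2
  rw [dif_pos h2, dif_pos h1, coe_add_inf']
  refine Finset.inf'_congr h2 hset.symm ?_
  intro k hk
  have hkB : B i k ≠ ⊥ := by simpa using hk
  by_cases hs : svec A P y k = ⊥
  · rw [if_pos hs, if_pos hs]; simp
  · rw [if_neg hs, if_neg hs, ← WithBot.coe_add, WithBot.coe_inj, sval_Bs B w hkB]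
    ring

end shift

end main
end SD

/-- The condition number of `𝒫_ℝ(F)` coincides with the condition number of `𝒫(F*)`
(equalities of infima in `[0, +∞]`, with `inf ∅ = +∞`). -/
theorem stmt3 (hm : 0 < m) (hn : 0 < n) (hq : 0 < q)
    (A : Fin m → Fin n → WithBot ℝ) (B : Fin m → Fin q → WithBot ℝ)
    (P : Fin q → Fin n → ℝ)
    (hAcol : ∀ j, ∃ i, A i j ≠ ⊥)
    (hArow : ∀ i, ∃ j, A i j ≠ ⊥)
    (hBrow : ∀ i, ∃ k, B i k ≠ ⊥)
    (hPnn : ∀ k l, 0 ≤ P k l)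
    (hPsum : ∀ k, ∑ l, P k l = 1) :
    (FeasR (shapley A B P) →
      sInf ((fun u : Fin n → ℝ => (‖u‖₊ : ℝ≥0∞)) ''
          {u | ¬ FeasR (pertR u (shapley A B P))}) =
      sInf ((fun w : Fin m → ℝ => (‖w‖₊ : ℝ≥0∞)) ''
          {w | FeasT (pertT w (dualShapleyT A B P))})) ∧
    (¬ FeasR (shapley A B P) →
      sInf ((fun u : Fin n → ℝ => (‖u‖₊ : ℝ≥0∞)) ''
          {u | FeasR (pertR u (shapley A B P))}) =
      sInf ((fun w : Fin m → ℝ => (‖w‖₊ : ℝ≥0∞)) ''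
          {w | ¬ FeasT (pertT w (dualShapleyT A B P))})) := by
  haveI : Nonempty (Fin n) := Fin.pos_iff_nonempty.mp hn
  haveI : Nonempty (Fin m) := Fin.pos_iff_nonempty.mp hm
  have habs : ∀ (d : ℕ) (v : Fin d → ℝ) (i : Fin d), |v i| ≤ ‖v‖ := fun d v i => by
    rw [← Real.norm_eq_abs]; exact norm_le_pi_norm v i
  have hnc : ∀ (d : ℕ) [Nonempty (Fin d)] (c : ℝ), ‖(fun _ : Fin d => c)‖₊ = ‖c‖₊ :=
    fun d _ c => pi_nnnorm_const c
  constructor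
  · intro _hF
    apply le_antisymm
    · apply le_sInf
      rintro b ⟨w, hw, rfl⟩
      simp only [Set.mem_setOf_eq] at hw
      rw [SD.pertT_dual_eq A B P w hBrow] at hw
      have hnf : ¬ FeasR (shapley A (SD.Bs B w) P) := fun hf =>
        SD.weak_duality A (SD.Bs B w) P hAcol hArow (SD.hBrowS B w hBrow) hPnn hPsum hf hw
      have hu : (fun _ : Fin n => -‖w‖) ∈ {u | ¬ FeasR (pertR u (shapley A B P))} := by
        intro hfe
        obtain ⟨x, hx⟩ := hfe
        refine hnf ⟨x, fun j => lt_of_lt_of_le ?_ (SD.shapley_Bs_ge A B P w hAcol hBrow (-‖w‖)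
          (fun i => by have := (abs_le.mp (habs m w i)).2; linarith) x j)⟩
        have := hx j
        simp only [pertR] at this
        linarith
      refine le_trans (sInf_le ⟨_, hu, rfl⟩) ?_
      rw [ENNReal.coe_le_coe, hnc n (-‖w‖), nnnorm_neg, nnnorm_norm]
    · apply le_sInf
      rintro b ⟨u, hu, rfl⟩
      simp only [Set.mem_setOf_eq] at hu
      set w : Fin m → ℝ := fun _ => ‖u‖ with hwdef
      have hnf : ¬ FeasR (shapley A (SD.Bs B w) P) := by
        rintro ⟨x, hx⟩
        refine hu ⟨x, fun j => lt_of_lt_of_le (hx j) ?_⟩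
        have h1 := SD.shapley_Bs_le A B P w hAcol hBrow (-‖u‖) (fun i => le_refl _) x j
        have h2 := (abs_le.mp (habs n u j)).1
        simp only [pertR]
        linarith
      have hft := SD.strong_duality A (SD.Bs B w) P hm hn hq hAcol hArow
        (SD.hBrowS B w hBrow) hPnn hPsum hnf
      rw [← SD.pertT_dual_eq A B P w hBrow] at hft
      refine le_trans (sInf_le ⟨w, hft, rfl⟩) ?_
      rw [ENNReal.coe_le_coe, hwdef, hnc m ‖u‖, nnnorm_norm]
  · intro _hF
    apply le_antisymm
    · apply le_sInf
      rintro b ⟨w, hw, rfl⟩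
      simp only [Set.mem_setOf_eq] at hw
      rw [SD.pertT_dual_eq A B P w hBrow] at hw
      have hf : FeasR (shapley A (SD.Bs B w) P) := by
        by_contra hnf
        exact hw (SD.strong_duality A (SD.Bs B w) P hm hn hq hAcol hArow
          (SD.hBrowS B w hBrow) hPnn hPsum hnf)
      obtain ⟨x, hx⟩ := hf
      have hu : (fun _ : Fin n => ‖w‖) ∈ {u | FeasR (pertR u (shapley A B P))} := by
        refine ⟨x, fun j => ?_⟩
        have h1 := SD.shapley_Bs_le A B P w hAcol hBrow ‖w‖
          (fun i => by have := (abs_le.mp (habs m w i)).1; linarith) x j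
        have := hx j
        simp only [pertR]
        linarith
      refine le_trans (sInf_le ⟨_, hu, rfl⟩) ?_
      rw [ENNReal.coe_le_coe, hnc n ‖w‖, nnnorm_norm]
    · apply le_sInf
      rintro b ⟨u, hu, rfl⟩
      simp only [Set.mem_setOf_eq] at hu
      obtain ⟨x, hx⟩ := hu
      set w : Fin m → ℝ := fun _ => -‖u‖ with hwdef
      have hf : FeasR (shapley A (SD.Bs B w) P) := by
        refine ⟨x, fun j => ?_⟩
        have h1 := SD.shapley_Bs_ge A B P w hAcol hBrow ‖u‖ (fun i => by rw [hwdef, neg_neg]) x j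
        have h2 := (abs_le.mp (habs n u j)).2
        have := hx j
        simp only [pertR] at this
        linarith
      have hnt : ¬ FeasT (dualShapleyT A (SD.Bs B w) P) := fun ht =>
        SD.weak_duality A (SD.Bs B w) P hAcol hArow (SD.hBrowS B w hBrow) hPnn hPsum hf ht
      rw [← SD.pertT_dual_eq A B P w hBrow] at hnt
      refine le_trans (sInf_le ⟨w, hnt, rfl⟩) ?_
      rw [ENNReal.coe_le_coe, hwdef, hnc m (-‖u‖), nnnorm_neg, nnnorm_norm]
end
end

section
/- Let A be an m×n matrix and B an m×q matrix with entries in T = ℝ ∪ {−∞} such that every column of A has at least one finite entry, every row of A has at least one finite entry, and every row of B has at least one finite entry, and let P be a q×n row-stochastic matrix; let F : ℝⁿ → ℝⁿ be the associated Shapley operator and F* : Tᵐ → Tᵐ the dual Shapley operator. Then either there exists y ∈ Tᵐ with y ≠ 𝟘 and y ≤ F*(y), or there exists x ∈ ℝⁿ with x_i < F(x)_i for all i. -/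
noncomputable section

variable {m n q : ℕ}

namespace Stmt4Proof


open Finset

open scoped Classical

/-! ### total sup/inf over finsets of reals -/

noncomputable def sup0 {α : Type*} (s : Finset α) (f : α → ℝ) : ℝ :=
  if h : s.Nonempty then s.sup' h f else 0

noncomputable def inf0 {α : Type*} (s : Finset α) (f : α → ℝ) : ℝ :=
  if h : s.Nonempty then s.inf' h f else 0

variable {α : Type*} {s t : Finset α} {f g : α → ℝ} {b c : ℝ}

lemma sup0_of_ne (h : s.Nonempty) (f : α → ℝ) : sup0 s f = s.sup' h f := dif_pos h

lemma inf0_of_ne (h : s.Nonempty) (f : α → ℝ) : inf0 s f = s.inf' h f := dif_pos h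

lemma le_sup0 {a : α} (ha : a ∈ s) (f : α → ℝ) : f a ≤ sup0 s f := by
  rw [sup0_of_ne ⟨a, ha⟩]; exact Finset.le_sup' f ha

lemma sup0_le (h : s.Nonempty) (hb : ∀ a ∈ s, f a ≤ b) : sup0 s f ≤ b := by
  rw [sup0_of_ne h]; exact Finset.sup'_le h f hb

lemma inf0_le {a : α} (ha : a ∈ s) (f : α → ℝ) : inf0 s f ≤ f a := by
  rw [inf0_of_ne ⟨a, ha⟩]; exact Finset.inf'_le f ha

lemma le_inf0 (h : s.Nonempty) (hb : ∀ a ∈ s, b ≤ f a) : b ≤ inf0 s f := by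
  rw [inf0_of_ne h]; exact Finset.le_inf' h f hb

lemma exists_sup0 (h : s.Nonempty) (f : α → ℝ) : ∃ a ∈ s, sup0 s f = f a := by
  rw [sup0_of_ne h]
  obtain ⟨a, ha, he⟩ := Finset.exists_mem_eq_sup' h f
  exact ⟨a, ha, he⟩

lemma exists_inf0 (h : s.Nonempty) (f : α → ℝ) : ∃ a ∈ s, inf0 s f = f a := by
  rw [inf0_of_ne h]
  obtain ⟨a, ha, he⟩ := Finset.exists_mem_eq_inf' h f
  exact ⟨a, ha, he⟩

lemma sup0_mono_fun (h : ∀ a ∈ s, f a ≤ g a) : sup0 s f ≤ sup0 s g := by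
  rcases s.eq_empty_or_nonempty with he | hne
  · subst he; simp [sup0]
  · rw [sup0_of_ne hne, sup0_of_ne hne]; exact Finset.sup'_mono_fun h

lemma inf0_mono_fun (h : ∀ a ∈ s, f a ≤ g a) : inf0 s f ≤ inf0 s g := by
  rcases s.eq_empty_or_nonempty with he | hne
  · subst he; simp [inf0]
  · rw [inf0_of_ne hne, inf0_of_ne hne]
    exact Finset.le_inf' hne g fun a ha => le_trans (Finset.inf'_le f ha) (h a ha)

lemma sup0_add_const (h : s.Nonempty) (f : α → ℝ) (c : ℝ) :
    sup0 s (fun a => f a + c) = sup0 s f + c := by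
  apply le_antisymm
  · exact sup0_le h fun a ha => add_le_add_left (le_sup0 ha f) c
  · obtain ⟨a, ha, he⟩ := exists_sup0 h f
    rw [he]; exact le_sup0 ha (fun a => f a + c)

lemma inf0_add_const (h : s.Nonempty) (f : α → ℝ) (c : ℝ) :
    inf0 s (fun a => f a + c) = inf0 s f + c := by
  apply le_antisymm
  · obtain ⟨a, ha, he⟩ := exists_inf0 h f
    rw [he]; exact inf0_le ha _
  · exact le_inf0 h fun a ha => add_le_add_left (inf0_le ha f) c

lemma neg_inf0 (h : s.Nonempty) (f : α → ℝ) : -(inf0 s f) = sup0 s (fun a => -(f a)) := by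
  apply le_antisymm
  · obtain ⟨a, ha, he⟩ := exists_inf0 h f
    rw [he]; exact le_sup0 ha (fun a => -(f a))
  · exact sup0_le h fun a ha => neg_le_neg (inf0_le ha f)

lemma sup0_const (h : s.Nonempty) (c : ℝ) : sup0 s (fun _ => c) = c := by
  rw [sup0_of_ne h]; exact Finset.sup'_const h c

lemma sup0_subset (hst : s ⊆ t) (h : s.Nonempty) : sup0 s f ≤ sup0 t f := by
  obtain ⟨a, ha, he⟩ := exists_sup0 h f
  rw [he]; exact le_sup0 (hst ha) f


/-! ### real-valued operators -/

variable (A : Fin m → Fin n → WithBot ℝ) (B : Fin m → Fin q → WithBot ℝ) (P : Fin q → Fin n → ℝ)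

def Icol (j : Fin n) : Finset (Fin m) := Finset.univ.filter fun i => A i j ≠ ⊥

def Krow (i : Fin m) : Finset (Fin q) := Finset.univ.filter fun k => B i k ≠ ⊥

def zr (y : Fin m → ℝ) (l : Fin n) : ℝ := sup0 (Icol A l) fun i => sval (A i l) + y i

def sk (y : Fin m → ℝ) (k : Fin q) : ℝ := ∑ l, P k l * zr A y l

def Gop (y : Fin m → ℝ) : Fin m → ℝ := fun i =>
  inf0 (Krow B i) fun k => - sval (B i k) + sk A P y k

def wx (x : Fin n → ℝ) (i : Fin m) : ℝ :=
  sup0 (Krow B i) fun k => sval (B i k) + ∑ l, P k l * x l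

def Fop (x : Fin n → ℝ) : Fin n → ℝ := fun j =>
  inf0 (Icol A j) fun i => - sval (A i j) + wx B P x i

def abar (l : Fin n) : ℝ := sup0 (Icol A l) fun i => sval (A i l)

/-- coercion lemma: a nonbot element equals the coercion of its value -/
lemma coe_sval {a : WithBot ℝ} (h : a ≠ ⊥) : ((sval a : ℝ) : WithBot ℝ) = a := by
  cases a with
  | bot => exact absurd rfl h
  | coe x => simp [sval]

section Bridge

variable {A} {B} {P}

lemma shapley_eq (hA : ∀ j : Fin n, (Icol A j).Nonempty) (hB : ∀ i : Fin m, (Krow B i).Nonempty)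
    (x : Fin n → ℝ) (j : Fin n) : shapley A B P x j = Fop A B P x j := by
  have hsetB : ∀ i : Fin m,
      {s : ℝ | ∃ k, B i k ≠ ⊥ ∧ s = sval (B i k) + ∑ l, P k l * x l}
        = (fun k => sval (B i k) + ∑ l, P k l * x l) '' ↑(Krow B i) := by
    intro i
    ext r
    simp only [Set.mem_setOf_eq, Set.mem_image, Krow, Finset.coe_filter, Finset.mem_univ,
      true_and, Set.mem_setOf_eq]
    constructor
    · rintro ⟨k, hk, rfl⟩; exact ⟨k, hk, rfl⟩
    · rintro ⟨k, hk, rfl⟩; exact ⟨k, hk, rfl⟩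
  have hset : {r : ℝ | ∃ i, A i j ≠ ⊥ ∧
      r = - sval (A i j) +
        sSup {s : ℝ | ∃ k, B i k ≠ ⊥ ∧ s = sval (B i k) + ∑ l, P k l * x l}}
      = (fun i => - sval (A i j) +
          sSup {s : ℝ | ∃ k, B i k ≠ ⊥ ∧ s = sval (B i k) + ∑ l, P k l * x l}) '' ↑(Icol A j) := by
    ext r
    simp only [Set.mem_setOf_eq, Set.mem_image, Icol, Finset.coe_filter, Finset.mem_univ,
      true_and, Set.mem_setOf_eq]
    constructor
    · rintro ⟨i, hi, rfl⟩; exact ⟨i, hi, rfl⟩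
    · rintro ⟨i, hi, rfl⟩; exact ⟨i, hi, rfl⟩
  rw [shapley, hset, ← Finset.inf'_eq_csInf_image _ (hA j), Fop, inf0_of_ne (hA j)]
  apply Finset.inf'_congr _ rfl
  intro i hi
  congr 1
  rw [hsetB i, ← Finset.sup'_eq_csSup_image _ (hB i), wx, sup0_of_ne (hB i)]

end Bridge

/-! ### monotonicity and additive homogeneity -/

section Mono

variable {A} {B} {P}

lemma zr_mono {y y' : Fin m → ℝ} (h : ∀ i, y i ≤ y' i) (l : Fin n) :
    zr A y l ≤ zr A y' l :=
  sup0_mono_fun fun i _ => add_le_add_right (h i) _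

lemma sk_mono (hPnn : ∀ k l, 0 ≤ P k l) {y y' : Fin m → ℝ} (h : ∀ i, y i ≤ y' i) (k : Fin q) :
    sk A P y k ≤ sk A P y' k :=
  Finset.sum_le_sum fun l _ => mul_le_mul_of_nonneg_left (zr_mono h l) (hPnn k l)

lemma Gop_mono (hPnn : ∀ k l, 0 ≤ P k l) {y y' : Fin m → ℝ} (h : ∀ i, y i ≤ y' i) (i : Fin m) :
    Gop A B P y i ≤ Gop A B P y' i :=
  inf0_mono_fun fun k _ => add_le_add_right (sk_mono hPnn h k) _

lemma wx_mono (hPnn : ∀ k l, 0 ≤ P k l) {x x' : Fin n → ℝ} (h : ∀ l, x l ≤ x' l) (i : Fin m) :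
    wx B P x i ≤ wx B P x' i :=
  sup0_mono_fun fun k _ => add_le_add_right
    (Finset.sum_le_sum fun l _ => mul_le_mul_of_nonneg_left (h l) (hPnn k l)) _

lemma Fop_mono (hPnn : ∀ k l, 0 ≤ P k l) {x x' : Fin n → ℝ} (h : ∀ l, x l ≤ x' l) (j : Fin n) :
    Fop A B P x j ≤ Fop A B P x' j :=
  inf0_mono_fun fun i _ => add_le_add_right (wx_mono hPnn h i) _

lemma zr_add_const (hA : ∀ j : Fin n, (Icol A j).Nonempty) (y : Fin m → ℝ) (c : ℝ) (l : Fin n) :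
    zr A (fun i => y i + c) l = zr A y l + c := by
  rw [zr, zr]
  have : (fun i => sval (A i l) + (y i + c)) = fun i => (sval (A i l) + y i) + c := by
    funext i; ring
  rw [this, sup0_add_const (hA l)]

lemma sk_add_const (hA : ∀ j : Fin n, (Icol A j).Nonempty) (hPsum : ∀ k, ∑ l, P k l = 1)
    (y : Fin m → ℝ) (c : ℝ) (k : Fin q) :
    sk A P (fun i => y i + c) k = sk A P y k + c := by
  simp only [sk, zr_add_const hA, mul_add]
  rw [Finset.sum_add_distrib, ← Finset.sum_mul, hPsum k, one_mul]

lemma Gop_add_const (hA : ∀ j : Fin n, (Icol A j).Nonempty)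
    (hB : ∀ i : Fin m, (Krow B i).Nonempty) (hPsum : ∀ k, ∑ l, P k l = 1)
    (y : Fin m → ℝ) (c : ℝ) :
    Gop A B P (fun i => y i + c) = fun i => Gop A B P y i + c := by
  funext i
  rw [Gop, Gop]
  have : (fun k => - sval (B i k) + sk A P (fun i' => y i' + c) k)
      = fun k => (- sval (B i k) + sk A P y k) + c := by
    funext k; rw [sk_add_const hA hPsum]; ring
  rw [this, inf0_add_const (hB i)]

lemma wx_add_const (hB : ∀ i : Fin m, (Krow B i).Nonempty) (hPsum : ∀ k, ∑ l, P k l = 1)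
    (x : Fin n → ℝ) (c : ℝ) (i : Fin m) :
    wx B P (fun l => x l + c) i = wx B P x i + c := by
  rw [wx, wx]
  have : (fun k => sval (B i k) + ∑ l, P k l * (x l + c))
      = fun k => (sval (B i k) + ∑ l, P k l * x l) + c := by
    funext k
    simp only [mul_add]
    rw [Finset.sum_add_distrib, ← Finset.sum_mul, hPsum k, one_mul]
    ring
  rw [this, sup0_add_const (hB i)]

lemma Fop_add_const (hA : ∀ j : Fin n, (Icol A j).Nonempty)
    (hB : ∀ i : Fin m, (Krow B i).Nonempty) (hPsum : ∀ k, ∑ l, P k l = 1)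
    (x : Fin n → ℝ) (c : ℝ) :
    Fop A B P (fun l => x l + c) = fun j => Fop A B P x j + c := by
  funext j
  rw [Fop, Fop]
  have : (fun i => - sval (A i j) + wx B P (fun l => x l + c) i)
      = fun i => (- sval (A i j) + wx B P x i) + c := by
    funext i; rw [wx_add_const hB hPsum]; ring
  rw [this, inf0_add_const (hA j)]

lemma Gop_iter_mono (hPnn : ∀ k l, 0 ≤ P k l) (p : ℕ) {y y' : Fin m → ℝ}
    (h : ∀ i, y i ≤ y' i) : ∀ i, (Gop A B P)^[p] y i ≤ (Gop A B P)^[p] y' i := by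
  induction p generalizing y y' with
  | zero => simpa using h
  | succ p ih =>
    intro i
    rw [Function.iterate_succ_apply', Function.iterate_succ_apply']
    exact Gop_mono hPnn (ih h) i

lemma Gop_iter_add_const (hA : ∀ j : Fin n, (Icol A j).Nonempty)
    (hB : ∀ i : Fin m, (Krow B i).Nonempty) (hPsum : ∀ k, ∑ l, P k l = 1)
    (p : ℕ) (y : Fin m → ℝ) (c : ℝ) :
    (Gop A B P)^[p] (fun i => y i + c) = fun i => (Gop A B P)^[p] y i + c := by
  induction p with
  | zero => simp
  | succ p ih =>
    rw [Function.iterate_succ_apply', Function.iterate_succ_apply', ih,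
      Gop_add_const hA hB hPsum]

end Mono

/-! ### the pairing inequality -/

def Mp (u : Fin n → ℝ) (y : Fin m → ℝ) : ℝ := sup0 Finset.univ fun l => - u l - zr A y l

section Pairing

variable {A} {B} {P}

lemma pairing (hn : 0 < n)
    (hA : ∀ j : Fin n, (Icol A j).Nonempty) (hB : ∀ i : Fin m, (Krow B i).Nonempty)
    (hPnn : ∀ k l, 0 ≤ P k l) (hPsum : ∀ k, ∑ l, P k l = 1) (u : Fin n → ℝ) (y : Fin m → ℝ) :
    Mp A (Fop A B P u) (Gop A B P y) ≤ Mp A u y := by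
  have hun : (Finset.univ : Finset (Fin n)).Nonempty := ⟨⟨0, hn⟩, Finset.mem_univ _⟩
  apply sup0_le hun
  intro l _
  have h5 : ∀ l', - u l' - zr A y l' ≤ Mp A u y := fun l' =>
    le_sup0 (Finset.mem_univ l') (fun l'' => - u l'' - zr A y l'')
  have h1 : - Fop A B P u l = sup0 (Icol A l) (fun i => sval (A i l) - wx B P u i) := by
    rw [Fop, neg_inf0 (hA l)]
    congr 1; funext i; ring
  obtain ⟨i0, hi0, hieq⟩ := exists_sup0 (hA l) (fun i => sval (A i l) - wx B P u i)
  have h2 : sval (A i0 l) + Gop A B P y i0 ≤ zr A (Gop A B P y) l :=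
    le_sup0 hi0 (fun i => sval (A i l) + Gop A B P y i)
  have h3 : - Gop A B P y i0 = sup0 (Krow B i0) (fun k => sval (B i0 k) - sk A P y k) := by
    rw [Gop, neg_inf0 (hB i0)]
    congr 1; funext k; ring
  obtain ⟨k0, hk0, hkeq⟩ := exists_sup0 (hB i0) (fun k => sval (B i0 k) - sk A P y k)
  have h4 : sval (B i0 k0) + ∑ l', P k0 l' * u l' ≤ wx B P u i0 := by
    rw [wx]; exact le_sup0 hk0 (fun k => sval (B i0 k) + ∑ l', P k l' * u l')
  have e1 : - Fop A B P u l = sval (A i0 l) - wx B P u i0 := by rw [h1, hieq]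
  have e2 : - Gop A B P y i0 = sval (B i0 k0) - sk A P y k0 := by rw [h3, hkeq]
  have e3 : - Fop A B P u l - zr A (Gop A B P y) l
      ≤ - wx B P u i0 - Gop A B P y i0 := by
    rw [e1]; linarith [h2]
  have key : - Fop A B P u l - zr A (Gop A B P y) l
      ≤ - (∑ l', P k0 l' * u l') - sk A P y k0 := by linarith [e3, e2, h4]
  have e4 : ∑ l', P k0 l' * (- u l' - zr A y l')
      = - (∑ l', P k0 l' * u l') - sk A P y k0 := by
    simp only [sk, mul_sub, mul_neg, Finset.sum_sub_distrib, Finset.sum_neg_distrib]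
  calc - Fop A B P u l - zr A (Gop A B P y) l
      ≤ ∑ l', P k0 l' * (- u l' - zr A y l') := by rw [e4]; exact key
    _ ≤ ∑ l', P k0 l' * Mp A u y :=
        Finset.sum_le_sum fun l' _ => mul_le_mul_of_nonneg_left (h5 l') (hPnn k0 l')
    _ = Mp A u y := by rw [← Finset.sum_mul, hPsum k0, one_mul]

end Pairing

/-! ### orbits -/

def uit : ℕ → Fin n → ℝ := fun p => (Fop A B P)^[p] (fun _ => 0)

def yit : ℕ → Fin m → ℝ := fun p => (Gop A B P)^[p] (fun _ => 0)

def Vv (p : ℕ) : ℝ := sup0 Finset.univ (yit A B P p)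

def Uu (p : ℕ) : ℝ := sup0 (Finset.range (p + 1)) (Vv A B P)

def yh (p : ℕ) (i : Fin m) : ℝ := yit A B P p i - Uu A B P p

section Orbit

variable {A} {B} {P}

lemma uit_zero : uit A B P 0 = fun _ => (0 : ℝ) := rfl

lemma yit_zero : yit A B P 0 = fun _ => (0 : ℝ) := rfl

lemma uit_succ (p : ℕ) : uit A B P (p + 1) = Fop A B P (uit A B P p) := by
  rw [uit, uit, Function.iterate_succ_apply']

lemma yit_succ (p : ℕ) : yit A B P (p + 1) = Gop A B P (yit A B P p) := by
  rw [yit, yit, Function.iterate_succ_apply']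

lemma pairing_iter (hn : 0 < n)
    (hA : ∀ j : Fin n, (Icol A j).Nonempty) (hB : ∀ i : Fin m, (Krow B i).Nonempty)
    (hPnn : ∀ k l, 0 ≤ P k l) (hPsum : ∀ k, ∑ l, P k l = 1) (p : ℕ) :
    Mp A (uit A B P p) (yit A B P p) ≤ Mp A (uit A B P 0) (yit A B P 0) := by
  induction p with
  | zero => exact le_refl _
  | succ p ih =>
    rw [uit_succ, yit_succ]
    exact le_trans (pairing hn hA hB hPnn hPsum _ _) ih

lemma yit_le_Vv (hm : 0 < m) (p : ℕ) (i : Fin m) : yit A B P p i ≤ Vv A B P p :=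
  le_sup0 (Finset.mem_univ i) (yit A B P p)

lemma Vv_le (hm : 0 < m) {p : ℕ} {c : ℝ} (h : ∀ i, yit A B P p i ≤ c) : Vv A B P p ≤ c :=
  sup0_le ⟨⟨0, hm⟩, Finset.mem_univ _⟩ fun i _ => h i

lemma Vv_zero (hm : 0 < m) : Vv A B P 0 = 0 := by
  rw [Vv, yit_zero]
  exact sup0_const ⟨⟨0, hm⟩, Finset.mem_univ _⟩ 0

lemma Vv_le_Uu (p : ℕ) : Vv A B P p ≤ Uu A B P p :=
  le_sup0 (Finset.self_mem_range_succ p) (Vv A B P)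

lemma Uu_mono {p p' : ℕ} (h : p ≤ p') : Uu A B P p ≤ Uu A B P p' :=
  sup0_subset (Finset.range_subset_range.2 (by omega)) Finset.nonempty_range_add_one

lemma Uu_le {p : ℕ} {c : ℝ} (h : ∀ s ≤ p, Vv A B P s ≤ c) : Uu A B P p ≤ c :=
  sup0_le Finset.nonempty_range_add_one fun s hs => h s (Finset.mem_range_succ_iff.1 hs)

lemma yh_nonpos (hm : 0 < m) (p : ℕ) (i : Fin m) : yh A B P p i ≤ 0 := by
  rw [yh]
  have := le_trans (yit_le_Vv hm p i) (Vv_le_Uu (A := A) (B := B) (P := P) p)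
  linarith

lemma yh_step (hA : ∀ j : Fin n, (Icol A j).Nonempty)
    (hB : ∀ i : Fin m, (Krow B i).Nonempty) (hPsum : ∀ k, ∑ l, P k l = 1)
    (p : ℕ) (i : Fin m) : yh A B P (p + 1) i ≤ Gop A B P (yh A B P p) i := by
  have h1 : Gop A B P (yh A B P p) = fun i => Gop A B P (yit A B P p) i + (- Uu A B P p) := by
    rw [← Gop_add_const hA hB hPsum]
    congr 1
  rw [h1, yh, ← yit_succ]
  have := Uu_mono (A := A) (B := B) (P := P) (Nat.le_succ p)
  simp only
  linarith

end Orbit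

/-! ### the max trick and nonnegativity of V -/

section Vnonneg

variable {A} {B} {P}

lemma max_trick (hn : 0 < n) (hA : ∀ j : Fin n, (Icol A j).Nonempty)
    (hB : ∀ i : Fin m, (Krow B i).Nonempty)
    (hPnn : ∀ k l, 0 ≤ P k l) (hPsum : ∀ k, ∑ l, P k l = 1)
    {p : ℕ} (hp : 0 < p) (hu : ∀ l, 0 < uit A B P p l) :
    ∃ x : Fin n → ℝ, ∀ j, x j < Fop A B P x j := by
  classical
  have hrange : (Finset.range p).Nonempty := Finset.nonempty_range_iff.2 (by omega)
  set ε : ℝ := inf0 Finset.univ (fun l => uit A B P p l) / p with hεdef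
  have hεpos : 0 < ε := by
    apply div_pos _ (by exact_mod_cast hp)
    obtain ⟨l0, _, hl0⟩ := exists_inf0 (s := (Finset.univ : Finset (Fin n)))
      ⟨⟨0, hn⟩, Finset.mem_univ _⟩ (fun l => uit A B P p l)
    rw [hl0]; exact hu l0
  have hpε : ∀ l, (p : ℝ) * ε ≤ uit A B P p l := by
    intro l
    have h1 : inf0 Finset.univ (fun l => uit A B P p l) ≤ uit A B P p l :=
      inf0_le (Finset.mem_univ l) _
    have : (p : ℝ) * ε = inf0 Finset.univ (fun l => uit A B P p l) := by
      rw [hεdef]; field_simp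
    linarith
  set x : Fin n → ℝ := fun l => sup0 (Finset.range p) (fun s => uit A B P s l - s * ε)
    with hxdef
  have hxge : ∀ s < p, ∀ l, uit A B P s l - s * ε ≤ x l := by
    intro s hs l
    exact le_sup0 (Finset.mem_range.2 hs) (fun s => uit A B P s l - s * ε)
  have hstep : ∀ s < p, ∀ j', uit A B P (s + 1) j' - s * ε ≤ Fop A B P x j' := by
    intro s hs j'
    have h1 : Fop A B P (fun l => uit A B P s l + (- (s * ε)))
        = fun j' => uit A B P (s + 1) j' + (- (s * ε)) := by
      rw [Fop_add_const hA hB hPsum, ← uit_succ]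
    have h2 : Fop A B P (fun l => uit A B P s l + (- (s * ε))) j' ≤ Fop A B P x j' := by
      apply Fop_mono hPnn
      intro l
      have h3 := hxge s hs l
      show uit A B P s l + (- (s * ε)) ≤ x l
      linarith
    rw [h1] at h2
    have h2' : uit A B P (s + 1) j' + (- ((s : ℝ) * ε)) ≤ Fop A B P x j' := h2
    linarith
  refine ⟨x, fun j => ?_⟩
  have hmain : x j + ε ≤ Fop A B P x j := by
    obtain ⟨s0, hs0mem, hs0⟩ := exists_sup0 hrange (fun s => uit A B P s j - s * ε)
    have hs0lt : s0 < p := Finset.mem_range.1 hs0mem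
    rcases Nat.eq_zero_or_pos s0 with h0 | hpos
    · -- x j = uit 0 j = 0 ≤ uit p j - p ε ; use step at s = p-1
      have hx0 : x j = 0 := by
        rw [hxdef]; simp only; rw [hs0, h0]; simp [uit_zero]
      obtain ⟨t, ht⟩ : ∃ t, p = t + 1 := ⟨p - 1, by omega⟩
      have h2 := hstep t (by omega) j
      rw [← ht] at h2
      have h3 := hpε j
      have hcast : ((t : ℝ)) = (p : ℝ) - 1 := by
        rw [ht]; push_cast; ring
      rw [hcast] at h2
      rw [hx0]
      nlinarith [hεpos]
    · obtain ⟨t, ht⟩ : ∃ t, s0 = t + 1 := ⟨s0 - 1, by omega⟩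
      have h2 := hstep t (by omega) j
      rw [← ht] at h2
      have hxj : x j = uit A B P s0 j - s0 * ε := hs0
      have hcast : ((t : ℝ)) = (s0 : ℝ) - 1 := by
        rw [ht]; push_cast; ring
      rw [hcast] at h2
      rw [hxj]
      linarith
  linarith [hmain, hεpos]

lemma V_nonneg (hm : 0 < m) (hn : 0 < n)
    (hA : ∀ j : Fin n, (Icol A j).Nonempty) (hB : ∀ i : Fin m, (Krow B i).Nonempty)
    (hPnn : ∀ k l, 0 ≤ P k l) (hPsum : ∀ k, ∑ l, P k l = 1)
    (hNR : ∀ x : Fin n → ℝ, ¬ ∀ j, x j < Fop A B P x j) :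
    ∀ p, 0 ≤ Vv A B P p := by
  by_contra hc
  push_neg at hc
  obtain ⟨p0, hp0⟩ := hc
  have hp0pos : 0 < p0 := by
    rcases Nat.eq_zero_or_pos p0 with h | h
    · rw [h, Vv_zero hm] at hp0; linarith
    · exact h
  -- V (s * p0) ≤ s * V p0
  have hVs : ∀ s : ℕ, Vv A B P (s * p0) ≤ s * Vv A B P p0 := by
    intro s
    induction s with
    | zero => simp [Vv_zero hm]
    | succ s ih =>
      have hiter : yit A B P ((s + 1) * p0) = (Gop A B P)^[p0] (yit A B P (s * p0)) := by
        rw [yit, yit, ← Function.iterate_add_apply]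
        congr 1
        ring
      have hpt : ∀ i, yit A B P ((s + 1) * p0) i ≤ yit A B P p0 i + Vv A B P (s * p0) := by
        intro i
        rw [hiter]
        have h1 : ∀ i', yit A B P (s * p0) i' ≤ (fun _ => (0:ℝ)) i' + Vv A B P (s * p0) := by
          intro i'; simpa using yit_le_Vv hm (s * p0) i'
        have h2 := Gop_iter_mono (A := A) (B := B) hPnn p0 h1 i
        rw [Gop_iter_add_const hA hB hPsum] at h2
        simpa [yit] using h2
      apply Vv_le hm fun i => ?_
      have h3 := hpt i
      have h4 := yit_le_Vv (A := A) (B := B) (P := P) hm p0 i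
      push_cast
      nlinarith [ih]
  -- pairing bound
  set M0 : ℝ := Mp A (uit A B P 0) (yit A B P 0) with hM0
  have hub : ∀ p l, - uit A B P p l - zr A (yit A B P p) l ≤ M0 := by
    intro p l
    have h1 : - uit A B P p l - zr A (yit A B P p) l ≤ Mp A (uit A B P p) (yit A B P p) := by
      rw [Mp]
      exact le_sup0 (Finset.mem_univ l) (fun l' => - uit A B P p l' - zr A (yit A B P p) l')
    exact le_trans h1 (pairing_iter hn hA hB hPnn hPsum p)
  have hzb : ∀ p l, zr A (yit A B P p) l ≤ abar A l + Vv A B P p := by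
    intro p l
    apply sup0_le (hA l)
    intro i hi
    exact add_le_add (le_sup0 hi (fun i => sval (A i l))) (yit_le_Vv hm p i)
  set C : ℝ := sup0 Finset.univ (abar A) + M0 with hC
  -- choose s with (s+1) * (- V p0) > C + 1
  obtain ⟨s, hs⟩ := exists_nat_gt ((C + 1) / (- Vv A B P p0))
  have hneg : 0 < - Vv A B P p0 := by linarith
  have hs2 : C + 1 < (s : ℝ) * (- Vv A B P p0) := by
    rw [div_lt_iff₀ hneg] at hs
    exact hs
  have hs3 : C + 1 < ((s + 1 : ℕ) : ℝ) * (- Vv A B P p0) := by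
    push_cast
    nlinarith [hneg]
  set p := (s + 1) * p0 with hp
  have hVp : Vv A B P p ≤ - (C + 1) := by
    have h1 := hVs (s + 1)
    have : ((s + 1 : ℕ) : ℝ) * Vv A B P p0 < - (C + 1) := by
      push_cast at hs3 ⊢
      nlinarith
    linarith
  have hup : ∀ l, 0 < uit A B P p l := by
    intro l
    have h1 := hub p l
    have h2 := hzb p l
    have h3 : abar A l ≤ sup0 Finset.univ (abar A) := le_sup0 (Finset.mem_univ l) _
    nlinarith [hVp, h1, h2, h3]
  obtain ⟨x, hx⟩ := max_trick hn hA hB hPnn hPsum (by positivity) hup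
  exact hNR x hx

end Vnonneg

/-! ### construction of the dual feasible vector -/

def Good (i : Fin m) : Prop := ∃ c : ℝ, ∀ N : ℕ, ∃ p, N ≤ p ∧ c ≤ yh A B P p i

def Tset (i : Fin m) : Set ℝ := {a : ℝ | ∃ N : ℕ, ∀ p, N ≤ p → yh A B P p i ≤ a}

def rr (i : Fin m) : ℝ := sInf (Tset A B P i)

def ybar : Fin m → WithBot ℝ := fun i =>
  if Good A B P i then ((rr A B P i : ℝ) : WithBot ℝ) else ⊥

def Lgood (l : Fin n) : Prop := ∃ i, A i l ≠ ⊥ ∧ Good A B P i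

section Construct

variable {A} {B} {P}

lemma pigeonhole (hm : 0 < m) (f : ℕ → Fin m) : ∃ i, ∀ N, ∃ p, N ≤ p ∧ f p = i := by
  by_contra hc
  push_neg at hc
  choose Nf hNf using hc
  set Pstar := Finset.univ.sup Nf with hP
  exact hNf (f Pstar) Pstar (Finset.le_sup (Finset.mem_univ _)) rfl

lemma zero_mem_Tset (hm : 0 < m) (i : Fin m) : (0 : ℝ) ∈ Tset A B P i :=
  ⟨0, fun p _ => yh_nonpos hm p i⟩

lemma bddBelow_Tset {i : Fin m} (hg : Good A B P i) : BddBelow (Tset A B P i) := by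
  obtain ⟨c, hc⟩ := hg
  refine ⟨c, fun a ha => ?_⟩
  obtain ⟨N, hN⟩ := ha
  obtain ⟨p, hp, hcp⟩ := hc N
  exact le_trans hcp (hN p hp)

lemma rr_le_zero (hm : 0 < m) {i : Fin m} (hg : Good A B P i) : rr A B P i ≤ 0 :=
  csInf_le (bddBelow_Tset hg) (zero_mem_Tset hm i)

lemma rr_freq {i : Fin m} (hg : Good A B P i) {ε : ℝ} (hε : 0 < ε) (N : ℕ) :
    ∃ p, N ≤ p ∧ rr A B P i - ε < yh A B P p i := by
  by_contra hc
  push_neg at hc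
  have hmem : rr A B P i - ε ∈ Tset A B P i := ⟨N, fun p hp => hc p hp⟩
  have h2 : rr A B P i ≤ rr A B P i - ε := csInf_le (bddBelow_Tset hg) hmem
  linarith

lemma rr_event (hm : 0 < m) {i : Fin m} (hg : Good A B P i) {ε : ℝ} (hε : 0 < ε) :
    ∃ N, ∀ p, N ≤ p → yh A B P p i ≤ rr A B P i + ε := by
  have hne : (Tset A B P i).Nonempty := ⟨0, zero_mem_Tset hm i⟩
  have hlt : sInf (Tset A B P i) < rr A B P i + ε := by
    have h0 : sInf (Tset A B P i) = rr A B P i := rfl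
    linarith
  obtain ⟨a, ha, halt⟩ := exists_lt_of_csInf_lt hne hlt
  obtain ⟨N, hN⟩ := ha
  exact ⟨N, fun p hp => le_trans (hN p hp) (le_of_lt halt)⟩

lemma notGood_event {i : Fin m} (hg : ¬ Good A B P i) (c : ℝ) :
    ∃ N, ∀ p, N ≤ p → yh A B P p i ≤ c := by
  rw [Good] at hg
  push_neg at hg
  obtain ⟨N, hN⟩ := hg c
  exact ⟨N, fun p hp => le_of_lt (hN p hp)⟩

lemma good_exists (hm : 0 < m) (hV : ∀ p, 0 ≤ Vv A B P p) : ∃ i, Good A B P i := by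
  have hargmax : ∀ p : ℕ, ∃ i : Fin m, yit A B P p i = Vv A B P p := by
    intro p
    obtain ⟨i, _, hi⟩ := exists_sup0 (s := (Finset.univ : Finset (Fin m)))
      ⟨⟨0, hm⟩, Finset.mem_univ _⟩ (yit A B P p)
    exact ⟨i, hi.symm⟩
  by_cases hbd : ∃ Cb : ℝ, ∀ p, Vv A B P p ≤ Cb
  · obtain ⟨Cb, hCb⟩ := hbd
    choose f hf using hargmax
    obtain ⟨i, hi⟩ := pigeonhole hm f
    refine ⟨i, - Cb, fun N => ?_⟩
    obtain ⟨p, hp, hfp⟩ := hi N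
    refine ⟨p, hp, ?_⟩
    have h1 : yit A B P p i = Vv A B P p := by rw [← hfp]; exact hf p
    have h2 : Uu A B P p ≤ Cb := Uu_le fun s _ => hCb s
    have h3 := hV p
    rw [yh, h1]
    linarith
  · push_neg at hbd
    have hrec : ∀ N : ℕ, ∃ p, N ≤ p ∧ Uu A B P p = Vv A B P p := by
      intro N
      obtain ⟨p1, hp1⟩ := hbd (Uu A B P N)
      have hex : ∃ p, Uu A B P N < Vv A B P p := ⟨p1, hp1⟩
      have hpspec : Uu A B P N < Vv A B P (Nat.find hex) := Nat.find_spec hex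
      have hNp : N ≤ Nat.find hex := by
        by_contra hlt
        push_neg at hlt
        have h1 : Vv A B P (Nat.find hex) ≤ Uu A B P N :=
          le_sup0 (Finset.mem_range.2 (by omega)) (Vv A B P)
        linarith
      refine ⟨Nat.find hex, hNp, ?_⟩
      apply le_antisymm
      · apply Uu_le
        intro s hs
        rcases eq_or_lt_of_le hs with he | hlt
        · rw [he]
        · have h2 := Nat.find_min hex hlt
          push_neg at h2
          linarith
      · exact Vv_le_Uu _
    choose g hg1 hg2 using hrec
    choose f hf using hargmax
    obtain ⟨i, hi⟩ := pigeonhole hm (fun N => f (g N))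
    refine ⟨i, 0, fun N => ?_⟩
    obtain ⟨N', hN', hfN'⟩ := hi N
    refine ⟨g N', le_trans hN' (hg1 N'), ?_⟩
    have h1 : yit A B P (g N') i = Vv A B P (g N') := by rw [← hfN']; exact hf (g N')
    rw [yh, h1, ← hg2 N']
    linarith

lemma ev_finset {β : Type*} (s : Finset β) (Q : β → ℕ → Prop)
    (h : ∀ b ∈ s, ∃ N, ∀ p, N ≤ p → Q b p) :
    ∃ N, ∀ p, N ≤ p → ∀ b ∈ s, Q b p := by
  classical
  choose Nf hNf using fun b (hb : b ∈ s) => h b hb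
  refine ⟨s.sup fun b => if hb : b ∈ s then Nf b hb else 0, fun p hp b hb => ?_⟩
  apply hNf b hb
  have h1 : (if hb' : b ∈ s then Nf b hb' else 0)
      ≤ s.sup fun b => if hb' : b ∈ s then Nf b hb' else 0 :=
    Finset.le_sup (f := fun b => if hb' : b ∈ s then Nf b hb' else 0) hb
  rw [dif_pos hb] at h1
  omega

lemma Z_bot_of_not {l : Fin n} (hnl : ¬ Lgood A B P l) : zvec A (ybar A B P) l = ⊥ := by
  rw [zvec]
  apply le_bot_iff.1
  apply Finset.sup_le
  intro i _
  rcases eq_or_ne (A i l) ⊥ with hb | hb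
  · rw [hb]; simp
  · have hng : ¬ Good A B P i := fun hg => hnl ⟨i, hb, hg⟩
    have hybot : ybar A B P i = ⊥ := if_neg hng
    rw [hybot]; simp

lemma Z_coe_le {l : Fin n} {i : Fin m} (hb : A i l ≠ ⊥) (hg : Good A B P i) :
    ((sval (A i l) + rr A B P i : ℝ) : WithBot ℝ) ≤ zvec A (ybar A B P) l := by
  rw [zvec]
  have h1 : ybar A B P i = ((rr A B P i : ℝ) : WithBot ℝ) := if_pos hg
  have h2 : A i l + ybar A B P i = ((sval (A i l) + rr A B P i : ℝ) : WithBot ℝ) := by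
    rw [h1, WithBot.coe_add, coe_sval hb]
  rw [← h2]
  exact Finset.le_sup (f := fun i' => A i' l + ybar A B P i') (Finset.mem_univ i)

lemma Z_ne_bot {l : Fin n} (hl : Lgood A B P l) : zvec A (ybar A B P) l ≠ ⊥ := by
  obtain ⟨i, hb, hg⟩ := hl
  intro hbot
  have h1 := Z_coe_le hb hg
  rw [hbot, le_bot_iff] at h1
  exact WithBot.coe_ne_bot h1

lemma Z_sval_ub {l : Fin n} {i : Fin m} (hb : A i l ≠ ⊥) (hg : Good A B P i) :
    sval (A i l) + rr A B P i ≤ sval (zvec A (ybar A B P) l) := by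
  have h1 := Z_coe_le hb hg
  have h2 : Lgood A B P l := ⟨i, hb, hg⟩
  rw [← coe_sval (Z_ne_bot h2)] at h1
  exact_mod_cast h1

lemma zr_le_abar {w : Fin m → ℝ} (hw : ∀ i, w i ≤ 0) (l : Fin n) :
    zr A w l ≤ abar A l := by
  rcases (Icol A l).eq_empty_or_nonempty with he | hne
  · rw [zr, abar, he]; simp [sup0]
  · rw [zr, abar, sup0_of_ne hne, sup0_of_ne hne]
    apply Finset.sup'_mono_fun
    intro i _
    have := hw i; linarith

lemma E1 (hm : 0 < m) (hA : ∀ j : Fin n, (Icol A j).Nonempty) {ε : ℝ} (hε : 0 < ε) :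
    ∃ N, ∀ p, N ≤ p → ∀ l : Fin n, Lgood A B P l →
      zr A (yh A B P p) l ≤ sval (zvec A (ybar A B P) l) + ε := by
  have h1 : ∀ l ∈ (Finset.univ : Finset (Fin n)), ∃ N, ∀ p, N ≤ p →
      (Lgood A B P l → zr A (yh A B P p) l ≤ sval (zvec A (ybar A B P) l) + ε) := by
    intro l _
    by_cases hl : Lgood A B P l
    · have h2 : ∀ i ∈ Icol A l, ∃ N, ∀ p, N ≤ p →
          sval (A i l) + yh A B P p i ≤ sval (zvec A (ybar A B P) l) + ε := by
        intro i hi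
        have hbi : A i l ≠ ⊥ := by
          simp only [Icol, Finset.mem_filter] at hi
          exact hi.2
        by_cases hg : Good A B P i
        · obtain ⟨N, hN⟩ := rr_event hm hg hε
          refine ⟨N, fun p hp => ?_⟩
          have h3 := Z_sval_ub hbi hg
          have h4 := hN p hp
          linarith
        · obtain ⟨N, hN⟩ := notGood_event hg
            (sval (zvec A (ybar A B P) l) + ε - sval (A i l))
          exact ⟨N, fun p hp => by linarith [hN p hp]⟩
      obtain ⟨N, hN⟩ := ev_finset (Icol A l) _ h2
      refine ⟨N, fun p hp _ => ?_⟩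
      exact sup0_le (hA l) fun i hi => hN p hp i hi
    · exact ⟨0, fun p _ hl' => absurd hl' hl⟩
  obtain ⟨N, hN⟩ := ev_finset Finset.univ _ h1
  exact ⟨N, fun p hp l => hN p hp l (Finset.mem_univ l)⟩

lemma E1' (hA : ∀ j : Fin n, (Icol A j).Nonempty) {l : Fin n} (hnl : ¬ Lgood A B P l) (c : ℝ) :
    ∃ N, ∀ p, N ≤ p → zr A (yh A B P p) l ≤ c := by
  have h2 : ∀ i ∈ Icol A l, ∃ N, ∀ p, N ≤ p → sval (A i l) + yh A B P p i ≤ c := by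
    intro i hi
    have hbi : A i l ≠ ⊥ := by
      simp only [Icol, Finset.mem_filter] at hi
      exact hi.2
    have hng : ¬ Good A B P i := fun hg => hnl ⟨i, hbi, hg⟩
    obtain ⟨N, hN⟩ := notGood_event hng (c - sval (A i l))
    exact ⟨N, fun p hp => by linarith [hN p hp]⟩
  obtain ⟨N, hN⟩ := ev_finset (Icol A l) _ h2
  exact ⟨N, fun p hp => sup0_le (hA l) fun i hi => hN p hp i hi⟩

lemma freq_lower (hA : ∀ j : Fin n, (Icol A j).Nonempty)
    (hB : ∀ i : Fin m, (Krow B i).Nonempty) (hPsum : ∀ k, ∑ l, P k l = 1)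
    {i : Fin m} (hg : Good A B P i) {k : Fin q} (hk : k ∈ Krow B i)
    {ε : ℝ} (hε : 0 < ε) (N : ℕ) :
    ∃ p, N ≤ p ∧ sval (B i k) + (rr A B P i - ε) ≤ sk A P (yh A B P p) k := by
  obtain ⟨p1, hp1, hlow⟩ := rr_freq hg hε (N + 1)
  obtain ⟨p, hp⟩ : ∃ p, p1 = p + 1 := ⟨p1 - 1, by omega⟩
  subst hp
  refine ⟨p, by omega, ?_⟩
  have h1 := yh_step hA hB hPsum p i
  have h2 : Gop A B P (yh A B P p) i ≤ - sval (B i k) + sk A P (yh A B P p) k := by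
    rw [Gop]
    exact inf0_le hk (fun k' => - sval (B i k') + sk A P (yh A B P p) k')
  linarith

lemma mass_zero (hm : 0 < m) (hA : ∀ j : Fin n, (Icol A j).Nonempty)
    (hB : ∀ i : Fin m, (Krow B i).Nonempty)
    (hPnn : ∀ k l, 0 ≤ P k l) (hPsum : ∀ k, ∑ l, P k l = 1)
    {i : Fin m} (hg : Good A B P i) {k : Fin q} (hk : k ∈ Krow B i)
    {l0 : Fin n} (hnl : ¬ Lgood A B P l0) : P k l0 = 0 := by
  by_contra hne
  have hθ : 0 < P k l0 := lt_of_le_of_ne (hPnn k l0) (Ne.symm hne)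
  set Sb : ℝ := ∑ l', P k l' * |abar A l'| with hSb
  set c : ℝ := (sval (B i k) + rr A B P i - 1 - Sb) / P k l0 - 1 with hc
  obtain ⟨N1, hN1⟩ := E1' hA hnl c
  obtain ⟨p, hpN, hlow⟩ := freq_lower hA hB hPsum hg hk one_pos N1
  have hupper : sk A P (yh A B P p) k ≤ P k l0 * c + Sb := by
    have hsplit : ∑ l', P k l' * zr A (yh A B P p) l'
        = (∑ l' ∈ Finset.univ.erase l0, P k l' * zr A (yh A B P p) l')
          + P k l0 * zr A (yh A B P p) l0 :=
      (Finset.sum_erase_add _ _ (Finset.mem_univ l0)).symm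
    rw [sk, hsplit]
    have hterm : P k l0 * zr A (yh A B P p) l0 ≤ P k l0 * c :=
      mul_le_mul_of_nonneg_left (hN1 p hpN) (hPnn k l0)
    have hrest : ∑ l' ∈ Finset.univ.erase l0, P k l' * zr A (yh A B P p) l' ≤ Sb := by
      rw [hSb]
      have hstep1 : ∑ l' ∈ Finset.univ.erase l0, P k l' * zr A (yh A B P p) l'
          ≤ ∑ l' ∈ Finset.univ.erase l0, P k l' * |abar A l'| := by
        apply Finset.sum_le_sum
        intro l' _
        apply mul_le_mul_of_nonneg_left _ (hPnn k l')
        exact le_trans (zr_le_abar (fun i' => yh_nonpos hm p i') l') (le_abs_self _)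
      apply le_trans hstep1
      apply Finset.sum_le_sum_of_subset_of_nonneg (Finset.erase_subset _ _)
      intro l' _ _
      exact mul_nonneg (hPnn k l') (abs_nonneg _)
    linarith
  have hPc : P k l0 * c = sval (B i k) + rr A B P i - 1 - Sb - P k l0 := by
    rw [hc]
    field_simp
  linarith

lemma main_est (hm : 0 < m) (hA : ∀ j : Fin n, (Icol A j).Nonempty)
    (hB : ∀ i : Fin m, (Krow B i).Nonempty)
    (hPnn : ∀ k l, 0 ≤ P k l) (hPsum : ∀ k, ∑ l, P k l = 1)
    {i : Fin m} (hg : Good A B P i) {k : Fin q} (hk : k ∈ Krow B i) :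
    sval (B i k) + rr A B P i ≤ ∑ l, P k l * sval (zvec A (ybar A B P) l) := by
  have key : ∀ ε : ℝ, 0 < ε → sval (B i k) + rr A B P i
      ≤ (∑ l, P k l * sval (zvec A (ybar A B P) l)) + 2 * ε := by
    intro ε hε
    obtain ⟨N1, hN1⟩ := E1 hm hA hε
    obtain ⟨p, hpN, hlow⟩ := freq_lower hA hB hPsum hg hk hε N1
    have hupper : sk A P (yh A B P p) k
        ≤ (∑ l, P k l * sval (zvec A (ybar A B P) l)) + ε := by
      have h1 : ∀ l ∈ (Finset.univ : Finset (Fin n)), P k l * zr A (yh A B P p) l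
          ≤ P k l * (sval (zvec A (ybar A B P) l) + ε) := by
        intro l _
        by_cases hl : Lgood A B P l
        · exact mul_le_mul_of_nonneg_left (hN1 p hpN l hl) (hPnn k l)
        · rw [mass_zero hm hA hB hPnn hPsum hg hk hl]; simp
      calc sk A P (yh A B P p) k
          ≤ ∑ l, P k l * (sval (zvec A (ybar A B P) l) + ε) := Finset.sum_le_sum h1
        _ = (∑ l, P k l * sval (zvec A (ybar A B P) l)) + ε := by
            simp only [mul_add]
            rw [Finset.sum_add_distrib, ← Finset.sum_mul, hPsum k, one_mul]
    linarith
  by_contra hcon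
  push_neg at hcon
  have hδpos : 0 < (sval (B i k) + rr A B P i
      - ∑ l, P k l * sval (zvec A (ybar A B P) l)) / 4 := by linarith
  have := key _ hδpos
  linarith

lemma construct_y (hm : 0 < m) (hn : 0 < n)
    (hA : ∀ j : Fin n, (Icol A j).Nonempty) (hB : ∀ i : Fin m, (Krow B i).Nonempty)
    (hPnn : ∀ k l, 0 ≤ P k l) (hPsum : ∀ k, ∑ l, P k l = 1)
    (hV : ∀ p, 0 ≤ Vv A B P p) :
    ∃ y : Fin m → WithBot ℝ, y ≠ (fun _ => ⊥) ∧ y ≤ dualShapleyT A B P y := by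
  refine ⟨ybar A B P, ?_, ?_⟩
  · obtain ⟨i0, hi0⟩ := good_exists hm hV
    intro hcon
    have h1 : ybar A B P i0 = ⊥ := congrFun hcon i0
    have h2 : ybar A B P i0 = ((rr A B P i0 : ℝ) : WithBot ℝ) := if_pos hi0
    rw [h2] at h1
    exact WithBot.coe_ne_bot h1
  · intro i
    by_cases hg : Good A B P i
    · have h2 : ybar A B P i = ((rr A B P i : ℝ) : WithBot ℝ) := if_pos hg
      rw [h2]
      show ((rr A B P i : ℝ) : WithBot ℝ) ≤ dualShapleyT A B P (ybar A B P) i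
      rw [dualShapleyT]
      rw [dif_pos (show (Finset.filter (fun k => B i k ≠ ⊥) Finset.univ).Nonempty from hB i)]
      apply Finset.le_inf'
      intro k hk
      have hmass : ∀ l, zvec A (ybar A B P) l = ⊥ → P k l = 0 := by
        intro l hbotl
        have hnl : ¬ Lgood A B P l := fun hl => (Z_ne_bot hl) hbotl
        exact mass_zero hm hA hB hPnn hPsum hg hk hnl
      have hcond : ¬ ∃ l, 0 < P k l ∧ zvec A (ybar A B P) l = ⊥ := by
        rintro ⟨l, hP, hbotl⟩
        rw [hmass l hbotl] at hP
        exact lt_irrefl 0 hP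
      have hsvec : svec A P (ybar A B P) k
          = ((∑ l, P k l * sval (zvec A (ybar A B P) l) : ℝ) : WithBot ℝ) := by
        rw [svec, if_neg hcond]
      rw [if_neg (by rw [hsvec]; exact WithBot.coe_ne_bot), hsvec]
      have hest := main_est hm hA hB hPnn hPsum hg hk
      have hsv : sval ((((∑ l, P k l * sval (zvec A (ybar A B P) l)) : ℝ) : WithBot ℝ))
          = ∑ l, P k l * sval (zvec A (ybar A B P) l) := by
        rw [sval, WithBot.unbotD_coe]
      rw [hsv]
      exact WithBot.coe_le_coe.2 (by linarith)
    · have h2 : ybar A B P i = ⊥ := if_neg hg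
      rw [h2]
      exact bot_le

end Construct

end Stmt4Proof


/-- Either `𝒫(F*)` is feasible or `𝒫_ℝ(F)` is feasible. -/
theorem stmt4 (hm : 0 < m) (hn : 0 < n) (hq : 0 < q)
    (A : Fin m → Fin n → WithBot ℝ) (B : Fin m → Fin q → WithBot ℝ)
    (P : Fin q → Fin n → ℝ)
    (hAcol : ∀ j, ∃ i, A i j ≠ ⊥)
    (hArow : ∀ i, ∃ j, A i j ≠ ⊥)
    (hBrow : ∀ i, ∃ k, B i k ≠ ⊥)
    (hPnn : ∀ k l, 0 ≤ P k l)
    (hPsum : ∀ k, ∑ l, P k l = 1) :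
    (∃ y : Fin m → WithBot ℝ, y ≠ (fun _ => ⊥) ∧ y ≤ dualShapleyT A B P y) ∨
    (∃ x : Fin n → ℝ, ∀ j, x j < shapley A B P x j) := by
  classical
  by_cases hR : ∃ x : Fin n → ℝ, ∀ j, x j < shapley A B P x j
  · exact Or.inr hR
  · left
    have hA : ∀ j : Fin n, (Stmt4Proof.Icol A j).Nonempty := by
      intro j
      obtain ⟨i, hi⟩ := hAcol j
      exact ⟨i, by simp [Stmt4Proof.Icol, hi]⟩
    have hB : ∀ i : Fin m, (Stmt4Proof.Krow B i).Nonempty := by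
      intro i
      obtain ⟨k, hk⟩ := hBrow i
      exact ⟨k, by simp [Stmt4Proof.Krow, hk]⟩
    have hNR : ∀ x : Fin n → ℝ, ¬ ∀ j, x j < Stmt4Proof.Fop A B P x j := by
      intro x hx
      exact hR ⟨x, fun j => by rw [Stmt4Proof.shapley_eq hA hB]; exact hx j⟩
    have hV := Stmt4Proof.V_nonneg hm hn hA hB hPnn hPsum hNR
    exact Stmt4Proof.construct_y hm hn hA hB hPnn hPsum hV
end
end

section
/- Let F be a continuous, order-preserving, additively homogeneous self-map of Tⁿ that preserves ℝⁿ (i.e., F maps ℝⁿ into ℝⁿ). Then for every x ∈ ℝⁿ, the limit lim_{k→∞} ( min_i F^k(x)_i ) / k exists and equals the lower Collatz–Wielandt number c̲w̲(F) := sup{ μ ∈ ℝ : ∃ z ∈ ℝⁿ, F(z) ≥ μ + z }. -/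
noncomputable section

/-- The order topology on `T = ℝ ∪ {-∞}`. -/
instance : TopologicalSpace (WithBot ℝ) := Preorder.topology _

variable {n : ℕ}

/-- The canonical embedding of `ℝⁿ` into `Tⁿ`. -/
def toT (x : Fin n → ℝ) : Fin n → WithBot ℝ := fun i => (x i : WithBot ℝ)

/-- `F` is order-preserving. -/
def OrdPres (F : (Fin n → WithBot ℝ) → (Fin n → WithBot ℝ)) : Prop :=
  ∀ x y, x ≤ y → F x ≤ F y

/-- `F` is additively homogeneous. -/
def AddHomog (F : (Fin n → WithBot ℝ) → (Fin n → WithBot ℝ)) : Prop :=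
  ∀ (c : ℝ) (x : Fin n → WithBot ℝ),
    F (fun i => (c : WithBot ℝ) + x i) = fun i => (c : WithBot ℝ) + F x i

/-- For a continuous, order-preserving, additively homogeneous self-map of `Tⁿ` preserving
`ℝⁿ`, the set defining the lower Collatz–Wielandt number is nonempty and bounded above,
and for every `x ∈ ℝⁿ`, `lim_k (min_i F^k(x)_i)/k` exists and equals
`c̲w̲(F) = sup { μ : ∃ z ∈ ℝⁿ, F(z) ≥ μ + z }`. -/
theorem stmt17 (hn : 0 < n) (F : (Fin n → WithBot ℝ) → (Fin n → WithBot ℝ))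
    (hcont : Continuous F) (hmono : OrdPres F) (hhom : AddHomog F)
    (hpres : ∀ x : Fin n → ℝ, ∃ y : Fin n → ℝ, F (toT x) = toT y) :
    {μ : ℝ | ∃ z : Fin n → ℝ, ∀ i, ((μ + z i : ℝ) : WithBot ℝ) ≤ F (toT z) i}.Nonempty ∧
    BddAbove {μ : ℝ | ∃ z : Fin n → ℝ, ∀ i, ((μ + z i : ℝ) : WithBot ℝ) ≤ F (toT z) i} ∧
    ∀ x : Fin n → ℝ,
      Filter.Tendsto
        (fun k : ℕ => (⨅ i, sval (F^[k] (toT x) i)) / (k : ℝ))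
        Filter.atTop
        (nhds (sSup {μ : ℝ |
          ∃ z : Fin n → ℝ, ∀ i, ((μ + z i : ℝ) : WithBot ℝ) ≤ F (toT z) i})) := by
  haveI : Nonempty (Fin n) := ⟨⟨0, hn⟩⟩
  set S := {μ : ℝ | ∃ z : Fin n → ℝ, ∀ i, ((μ + z i : ℝ) : WithBot ℝ) ≤ F (toT z) i} with hS
  -- basic iterated versions of the hypotheses
  have hmono_it : ∀ (k : ℕ) (x y : Fin n → WithBot ℝ), x ≤ y → F^[k] x ≤ F^[k] y := by
    intro k
    induction k with
    | zero => intro x y h; simpa using h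
    | succ k ih =>
      intro x y h
      rw [Function.iterate_succ_apply', Function.iterate_succ_apply']
      exact hmono _ _ (ih x y h)
  have hhom_it : ∀ (k : ℕ) (c : ℝ) (x : Fin n → WithBot ℝ),
      F^[k] (fun i => (c : WithBot ℝ) + x i) = fun i => (c : WithBot ℝ) + F^[k] x i := by
    intro k
    induction k with
    | zero => intro c x; simp
    | succ k ih =>
      intro c x
      rw [Function.iterate_succ_apply', Function.iterate_succ_apply', ih, hhom]
  have htoT_inj : ∀ a b : Fin n → ℝ, toT a = toT b → a = b := by
    intro a b h
    funext i
    exact WithBot.coe_injective (congrFun h i)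
  obtain ⟨w0, hw0⟩ := hpres (fun _ => 0)
  -- nonemptiness
  have hSne : S.Nonempty := by
    refine ⟨⨅ i, w0 i, fun _ => 0, fun i => ?_⟩
    rw [hw0]
    show (((⨅ i, w0 i) + 0 : ℝ) : WithBot ℝ) ≤ (w0 i : WithBot ℝ)
    refine WithBot.coe_le_coe.mpr ?_
    simpa using ciInf_le (Set.finite_range w0).bddBelow i
  -- boundedness from above
  have hSbdd : BddAbove S := by
    refine ⟨⨆ i, w0 i, fun μ hμ => ?_⟩
    obtain ⟨z, hz⟩ := hμ
    obtain ⟨i₀, hi₀⟩ := Finite.exists_max z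
    have h1 : F (toT z) ≤ fun i => (z i₀ : WithBot ℝ) + F (toT fun _ => 0) i := by
      rw [← hhom (z i₀) (toT fun _ => 0)]
      apply hmono
      intro i
      show (z i : WithBot ℝ) ≤ (z i₀ : WithBot ℝ) + ((0 : ℝ) : WithBot ℝ)
      rw [← WithBot.coe_add]
      exact WithBot.coe_le_coe.mpr (by simpa using hi₀ i)
    have h2 := (hz i₀).trans (h1 i₀)
    rw [hw0] at h2
    have h3 : ((μ + z i₀ : ℝ) : WithBot ℝ) ≤ ((z i₀ + w0 i₀ : ℝ) : WithBot ℝ) := by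
      rw [WithBot.coe_add]; exact h2
    have h4 := WithBot.coe_le_coe.mp h3
    have h5 : μ ≤ w0 i₀ := by linarith
    exact h5.trans (le_ciSup (Set.finite_range w0).bddAbove i₀)
  refine ⟨hSne, hSbdd, fun x => ?_⟩
  -- real iterates
  have hiter : ∀ k : ℕ, ∃ y, F^[k] (toT x) = toT y := by
    intro k
    induction k with
    | zero => exact ⟨x, rfl⟩
    | succ k ih =>
      obtain ⟨y, hy⟩ := ih
      obtain ⟨w, hw⟩ := hpres y
      exact ⟨w, by rw [Function.iterate_succ_apply', hy, hw]⟩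
  choose g hg using hiter
  have hg0 : g 0 = x := (htoT_inj _ _ (hg 0)).symm
  have hstep_g : ∀ k, F (toT (g k)) = toT (g (k + 1)) := by
    intro k
    have h := hg (k + 1)
    rw [Function.iterate_succ_apply'] at h
    rw [← hg k]
    exact h
  have hit_g : ∀ k m, F^[k] (toT (g m)) = toT (g (k + m)) := by
    intro k m
    rw [← hg m, ← Function.iterate_add_apply, hg]
  set M := ⨆ i, x i with hM
  set a : ℕ → ℝ := fun k => ⨅ i, g k i with ha
  have hinf_le : ∀ (k : ℕ) (i), a k ≤ g k i := by
    intro k i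
    simp only [ha]
    exact ciInf_le (Set.finite_range _).bddBelow i
  have hle_inf : ∀ (k : ℕ) (c : ℝ), (∀ i, c ≤ g k i) → c ≤ a k := by
    intro k c h
    simp only [ha]
    exact le_ciInf h
  have hxM : ∀ i, x i ≤ M := by
    intro i
    simp only [hM]
    exact le_ciSup (Set.finite_range x).bddAbove i
  -- key superadditivity inequality
  have key : ∀ k m i, a m - M + g k i ≤ g (k + m) i := by
    intro k m i
    have h4 : F^[k] (fun j => ((a m - M : ℝ) : WithBot ℝ) + toT x j) ≤ F^[k] (toT (g m)) := by
      apply hmono_it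
      intro j
      show ((a m - M : ℝ) : WithBot ℝ) + (x j : WithBot ℝ) ≤ (g m j : WithBot ℝ)
      rw [← WithBot.coe_add]
      refine WithBot.coe_le_coe.mpr ?_
      have h2 := hinf_le m j
      have h3 := hxM j
      linarith
    rw [hhom_it] at h4
    have h5 := h4 i
    rw [hg k, hit_g k m] at h5
    have h6 : ((a m - M + g k i : ℝ) : WithBot ℝ) ≤ ((g (k + m) i : ℝ) : WithBot ℝ) := by
      rw [WithBot.coe_add]; exact h5
    exact WithBot.coe_le_coe.mp h6
  have hsuper : ∀ k m, a k + a m - M ≤ a (k + m) := by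
    intro k m
    refine hle_inf _ _ fun i => ?_
    have h1 := key k m i
    have h2 := hinf_le k i
    linarith
  -- membership of the approximants
  have hmem : ∀ k : ℕ, 0 < k → (a k - M) / k ∈ S := by
    intro k hk
    set ν := (a k - M) / k with hν
    have hk0 : (0 : ℝ) < k := by exact_mod_cast hk
    have hkν : (k : ℝ) * ν = a k - M := by
      rw [hν]; field_simp
    have hkne : (Finset.range k).Nonempty := Finset.nonempty_range_iff.mpr hk.ne'
    set z' : Fin n → ℝ := fun i => (Finset.range k).sup' hkne (fun j => g j i - j * ν) with hz'
    refine ⟨z', fun i => ?_⟩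
    obtain ⟨y', hy'⟩ := hpres z'
    rw [hy']
    show ((ν + z' i : ℝ) : WithBot ℝ) ≤ (y' i : WithBot ℝ)
    refine WithBot.coe_le_coe.mpr ?_
    have hstep : ∀ j ∈ Finset.range k, g (j + 1) i - j * ν ≤ y' i := by
      intro j hj
      have h1 : (fun l => ((-(j * ν) : ℝ) : WithBot ℝ) + toT (g j) l) ≤ toT z' := by
        intro l
        show ((-(j * ν) : ℝ) : WithBot ℝ) + ((g j l : ℝ) : WithBot ℝ) ≤ (z' l : WithBot ℝ)
        rw [← WithBot.coe_add]
        refine WithBot.coe_le_coe.mpr ?_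
        have h2 : g j l - j * ν ≤ z' l := by
          simp only [hz']
          exact Finset.le_sup' (fun j' => g j' l - j' * ν) hj
        linarith
      have h2 := hmono _ _ h1
      rw [hhom (-(j * ν)) (toT (g j))] at h2
      have h4 := h2 i
      rw [hstep_g j, hy'] at h4
      have h5 : ((-(j * ν) + g (j + 1) i : ℝ) : WithBot ℝ) ≤ ((y' i : ℝ) : WithBot ℝ) := by
        rw [WithBot.coe_add]; exact h4
      have h6 := WithBot.coe_le_coe.mp h5
      linarith
    have hzle : z' i ≤ y' i - ν := by
      simp only [hz']
      apply Finset.sup'_le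
      intro j hj
      rcases Nat.eq_zero_or_pos j with rfl | hj1
      · -- j = 0 case
        have h1 := hstep (k - 1) (by simp only [Finset.mem_range]; omega)
        have e : k - 1 + 1 = k := Nat.succ_pred_eq_of_pos hk
        rw [e] at h1
        have ec : ((k - 1 : ℕ) : ℝ) = (k : ℝ) - 1 := by
          have : 1 ≤ k := hk
          push_cast [this]; ring
        rw [ec] at h1
        have h2 := hinf_le k i
        have h3 := hxM i
        rw [hg0]
        -- goal : x i - 0 * ν ≤ y' i - ν
        have : a k - ((k : ℝ) - 1) * ν = ν + M := by
          have : a k = (k : ℝ) * ν + M := by linarith [hkν]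
          rw [this]; ring
        push_cast
        linarith
      · obtain ⟨j', rfl⟩ := Nat.exists_eq_add_of_lt hj1
        simp only [zero_add] at *
        have hj' : j' ∈ Finset.range k := by
          simp only [Finset.mem_range] at hj ⊢; omega
        have h1 := hstep j' hj'
        have : ((j' + 1 : ℕ) : ℝ) = (j' : ℝ) + 1 := by push_cast; ring
        rw [this]
        linarith
    linarith
  -- Fekete's lemma for `M - a k`
  have hsubb : Subadditive (fun k => M - a k) := by
    intro k m
    show M - a (k + m) ≤ (M - a k) + (M - a m)
    have := hsuper k m
    linarith
  have hbdd : BddBelow (Set.range fun k : ℕ => (M - a k) / k) := by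
    refine ⟨min (-(sSup S)) 0, fun r hr => ?_⟩
    obtain ⟨k, rfl⟩ := hr
    rcases Nat.eq_zero_or_pos k with rfl | hk
    · simp
    · show min (-(sSup S)) 0 ≤ (M - a k) / (k : ℝ)
      have h1 := le_csSup hSbdd (hmem k hk)
      have h2 : (M - a k) / k = -((a k - M) / k) := by ring
      have h3 := min_le_left (-(sSup S)) (0 : ℝ)
      rw [h2]
      have := neg_le_neg h1
      linarith
  have hlim := hsubb.tendsto_lim hbdd
  have htend' : Filter.Tendsto (fun k : ℕ => (a k - M) / k) Filter.atTop
      (nhds (-hsubb.lim)) := by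
    have h2 : (fun k : ℕ => (a k - M) / k) = fun k : ℕ => -((M - a k) / k) := by
      funext k; ring
    rw [h2]
    exact hlim.neg
  have htend : Filter.Tendsto (fun k : ℕ => a k / k) Filter.atTop (nhds (-hsubb.lim)) := by
    have h1 : Filter.Tendsto (fun k : ℕ => (a k - M) / k + M / k) Filter.atTop
        (nhds (-hsubb.lim + 0)) := htend'.add (tendsto_const_div_atTop_nhds_zero_nat M)
    have h2 : (fun k : ℕ => (a k - M) / k + M / k) = fun k : ℕ => a k / k := by
      funext k; ring
    rw [h2, add_zero] at h1
    exact h1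
  -- identification of the limit with the CW number
  have hL1 : -hsubb.lim ≤ sSup S := by
    refine le_of_tendsto htend' ?_
    filter_upwards [Filter.eventually_gt_atTop 0] with k hk
    exact le_csSup hSbdd (hmem k hk)
  have hL2 : sSup S ≤ -hsubb.lim := by
    refine csSup_le hSne fun μ hμ => ?_
    obtain ⟨z, hz⟩ := hμ
    set c := ⨅ i, (x i - z i) with hc
    have hlow : ∀ (k : ℕ) (i), ((k * μ + c + z i : ℝ) : WithBot ℝ) ≤ toT (g k) i := by
      intro k
      induction k with
      | zero =>
        intro i
        rw [hg0]
        show (((0 : ℕ) * μ + c + z i : ℝ) : WithBot ℝ) ≤ (x i : WithBot ℝ)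
        refine WithBot.coe_le_coe.mpr ?_
        have h1 : c ≤ x i - z i := by
          simp only [hc]
          exact ciInf_le (Set.finite_range _).bddBelow i
        push_cast
        linarith
      | succ k ih =>
        intro i
        have h1 : (fun l => ((k * μ + c : ℝ) : WithBot ℝ) + toT z l) ≤ toT (g k) := by
          intro l
          show ((k * μ + c : ℝ) : WithBot ℝ) + ((z l : ℝ) : WithBot ℝ) ≤ toT (g k) l
          rw [← WithBot.coe_add]
          exact ih l
        have h2 := hmono _ _ h1
        rw [hhom (k * μ + c) (toT z)] at h2
        have h3 := h2 i
        rw [hstep_g k] at h3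
        have h4 : ((k * μ + c : ℝ) : WithBot ℝ) + ((μ + z i : ℝ) : WithBot ℝ) ≤
            ((k * μ + c : ℝ) : WithBot ℝ) + F (toT z) i := add_le_add le_rfl (hz i)
        have h5 := h4.trans h3
        rw [← WithBot.coe_add] at h5
        have h7 : (((k + 1 : ℕ) : ℝ) * μ + c + z i : ℝ) = k * μ + c + (μ + z i) := by
          push_cast; ring
        show ((((k + 1 : ℕ) : ℝ) * μ + c + z i : ℝ) : WithBot ℝ) ≤ toT (g (k + 1)) i
        rw [h7]
        exact h5
    set mz := ⨅ i, z i with hmz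
    have hlowa : ∀ k : ℕ, (k : ℝ) * μ + (c + mz) ≤ a k := by
      intro k
      refine hle_inf _ _ fun i => ?_
      have h1 : ((k * μ + c + z i : ℝ) : WithBot ℝ) ≤ ((g k i : ℝ) : WithBot ℝ) := hlow k i
      have h2 := WithBot.coe_le_coe.mp h1
      have h3 : mz ≤ z i := by
        simp only [hmz]
        exact ciInf_le (Set.finite_range _).bddBelow i
      linarith
    have hmutend : Filter.Tendsto (fun k : ℕ => μ + (c + mz - M) / k) Filter.atTop
        (nhds (μ + 0)) :=
      tendsto_const_nhds.add (tendsto_const_div_atTop_nhds_zero_nat (c + mz - M))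
    rw [add_zero] at hmutend
    refine le_of_tendsto_of_tendsto hmutend htend' ?_
    filter_upwards [Filter.eventually_gt_atTop 0] with k hk
    have hk0 : (0 : ℝ) < k := by exact_mod_cast hk
    have h1 := hlowa k
    have h2 : μ + (c + mz - M) / k = ((k : ℝ) * μ + (c + mz - M)) / k := by
      field_simp
    rw [h2]
    have h3 : ((k : ℝ) * μ + (c + mz - M)) ≤ a k - M := by linarith
    gcongr
  have hfin : sSup S = -hsubb.lim := le_antisymm hL2 hL1
  have hfeq : (fun k : ℕ => (⨅ i, sval (F^[k] (toT x) i)) / (k : ℝ)) =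
      fun k : ℕ => a k / k := by
    funext k
    congr 1
    rw [hg k]
    simp only [toT, sval, WithBot.unbotD_coe, ha]
  rw [hfeq, hfin]
  exact htend
end
end
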